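/- arXiv:math/0605686 — 5 statements merged into one kernel-verified Lean document; each statement's English description precedes it below -/
import Mathlib

section
/- Let T be a positive bounded operator on a Hilbert space H and let S be a separating family of norm-one vectors in H (i.e., for any bounded operator A, if Aξ = 0 for all ξ ∈ S then A = 0). Then ‖T‖ = lim_{n→∞} sup_{ξ∈S} ⟨ξ, Tⁿ ξ⟩^{1/n}. -/
open Filter

section Aux

variable {H : Type*} [NormedAddCommGroup H] [InnerProductSpace ℂ H] [CompleteSpace H]

open ContinuousLinearMap

private lemma aux_pow_isPositive (T : H →L[ℂ] H) (hT : T.IsPositive) (n : ℕ) :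
    (T ^ n).IsPositive := by
  rw [← nonneg_iff_isPositive]
  exact CStarAlgebra.pow_nonneg ((nonneg_iff_isPositive T).mpr hT) n

omit [CompleteSpace H] in
private lemma aux_term_le (T : H →L[ℂ] H) {n : ℕ} (hn : 1 ≤ n) {ξ : H} (hξ : ‖ξ‖ = 1) :
    ((inner ℂ (ξ : H) ((T ^ n) (ξ : H)) : ℂ).re) ≤ ‖T‖ ^ n := by
  calc ((inner ℂ (ξ : H) ((T ^ n) (ξ : H)) : ℂ).re)
      ≤ ‖(inner ℂ (ξ : H) ((T ^ n) (ξ : H)) : ℂ)‖ := Complex.re_le_norm _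
    _ ≤ ‖ξ‖ * ‖(T ^ n) ξ‖ := norm_inner_le_norm _ _
    _ ≤ ‖ξ‖ * (‖T ^ n‖ * ‖ξ‖) := by
        gcongr
        exact (T ^ n).le_opNorm ξ
    _ = ‖T ^ n‖ := by rw [hξ]; ring
    _ ≤ ‖T‖ ^ n := norm_pow_le' T hn

private lemma aux_rpow_pow {x : ℝ} (hx : 0 ≤ x) {n : ℕ} (hn : 1 ≤ n) :
    (x ^ n) ^ ((n : ℝ)⁻¹) = x := by
  have hn0 : (n : ℝ) ≠ 0 := Nat.cast_ne_zero.mpr (by omega)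
  rw [← Real.rpow_natCast x n, ← Real.rpow_mul hx, mul_inv_cancel₀ hn0, Real.rpow_one]

/-- The key lower bound, via the continuous functional calculus. -/
private lemma aux_lower (T : H →L[ℂ] H) (hT : T.IsPositive)
    (S : Set H) (hSsep : ∀ A : H →L[ℂ] H, (∀ ξ ∈ S, A ξ = 0) → A = 0)
    {ε : ℝ} (hε : 0 < ε) (hεT : ε < ‖T‖) :
    ∃ c > 0, ∃ ξ₀ ∈ S, ∀ n : ℕ,
      (‖T‖ - ε) ^ n * c ≤ ((inner ℂ (ξ₀ : H) ((T ^ n) (ξ₀ : H)) : ℂ).re) := by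
  have hT0 : T ≠ 0 := by intro h; rw [h] at hεT; simp at hεT; linarith
  have h1 : (0 : H →L[ℂ] H) ≤ T := (nonneg_iff_isPositive T).mpr hT
  have : Nontrivial (H →L[ℂ] H) := ⟨T, 0, hT0⟩
  have h2 : ‖T‖ ∈ spectrum ℝ T := CStarAlgebra.norm_mem_spectrum_of_nonneg h1
  have h3 : IsSelfAdjoint T := hT.isSelfAdjoint
  set r : ℝ := ‖T‖ - ε with hr
  have hr0 : 0 < r := by simp [hr]; linarith
  set f : ℝ → ℝ := fun x => max 0 (min 1 ((x - r)/ε)) with hf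
  have hfc : Continuous f := by
    apply Continuous.max continuous_const
    exact Continuous.min continuous_const (by fun_prop)
  have hf01 : ∀ x, 0 ≤ f x ∧ f x ≤ 1 := fun x =>
    ⟨le_max_left _ _, max_le (by norm_num) (min_le_left _ _)⟩
  set A := cfc f T with hA
  have hAsa : IsSelfAdjoint A := cfc_predicate f T
  have h4 : A * A = cfc (fun x => f x * f x) T :=
    (cfc_mul f f T hfc.continuousOn hfc.continuousOn).symm
  have h7 : ∀ x ∈ spectrum ℝ T, 0 ≤ x := spectrum_nonneg_of_nonneg h1
  -- A ≠ 0
  have hsub : ‖T‖ - r = ε := by simp [hr]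
  have hfT : f ‖T‖ = 1 := by
    simp only [hf, hsub, div_self hε.ne']
    norm_num
  have hAne : A ≠ 0 := by
    intro h0
    have : ‖A‖ ≤ 0 := by simp [h0]
    rw [norm_cfc_le_iff f T le_rfl hfc.continuousOn h3] at this
    have := this ‖T‖ h2
    rw [hfT] at this; norm_num at this
  -- find the vector
  obtain ⟨ξ₀, hξ₀S, hξ₀⟩ : ∃ ξ₀ ∈ S, A ξ₀ ≠ 0 := by
    by_contra hcon
    push_neg at hcon
    exact hAne (hSsep A hcon)
  refine ⟨‖A ξ₀‖ ^ 2, pow_pos (norm_pos_iff.mpr hξ₀) 2, ξ₀, hξ₀S, ?_⟩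
  intro n
  -- operator inequality
  have h8 : r ^ n • (A * A) ≤ T ^ n := by
    have h5 : r ^ n • (A * A) = cfc (fun x => r ^ n * (f x * f x)) T := by
      rw [cfc_const_mul _ _ _ (by fun_prop), h4]
    rw [h5, ← cfc_pow_id (R := ℝ) T n h3]
    apply cfc_mono _ (by fun_prop) (by fun_prop)
    intro x hx
    rcases le_or_gt x r with hxr | hxr
    · have : f x = 0 := by
        simp only [hf, max_eq_left_iff]
        exact min_le_of_right_le (div_nonpos_of_nonpos_of_nonneg (by linarith) hε.le)
      rw [this]
      simpa using pow_nonneg (h7 x hx) n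
    · calc r ^ n * (f x * f x) ≤ r ^ n * 1 := by
            apply mul_le_mul_of_nonneg_left _ (pow_nonneg hr0.le n)
            calc f x * f x ≤ 1 * 1 := mul_le_mul (hf01 x).2 (hf01 x).2 (hf01 x).1 one_pos.le
              _ = 1 := one_mul 1
        _ = r ^ n := mul_one _
        _ ≤ x ^ n := pow_le_pow_left₀ hr0.le hxr.le n
  -- transfer to inner products
  have h9 := ((le_def _ _).mp h8).re_inner_nonneg_right ξ₀
  have hsym : (inner ℂ ξ₀ ((A * A) ξ₀) : ℂ) = (‖A ξ₀‖ : ℂ) ^ 2 := by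
    rw [ContinuousLinearMap.mul_apply,
      ← ContinuousLinearMap.adjoint_inner_left A (A ξ₀) ξ₀, hAsa.adjoint_eq,
      inner_self_eq_norm_sq_to_K]
    norm_num
  have h10 : (inner ℂ ξ₀ ((r ^ n • (A * A)) ξ₀) : ℂ).re = r ^ n * ‖A ξ₀‖ ^ 2 := by
    rw [ContinuousLinearMap.smul_apply, RCLike.real_smul_eq_coe_smul (K := ℂ),
      inner_smul_right, hsym]
    norm_cast
    simp [RCLike.mul_re]
    norm_cast
    ring
  rw [ContinuousLinearMap.sub_apply, inner_sub_right, map_sub, sub_nonneg] at h9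
  calc r ^ n * ‖A ξ₀‖ ^ 2 = (inner ℂ ξ₀ ((r ^ n • (A * A)) ξ₀) : ℂ).re := h10.symm
    _ ≤ ((inner ℂ (ξ₀ : H) ((T ^ n) (ξ₀ : H)) : ℂ).re) := h9

end Aux

/-- For a positive bounded operator `T` on a Hilbert space and a separating
family `S` of norm-one vectors, `‖T‖ = lim_n sup_{ξ ∈ S} ⟨ξ, Tⁿξ⟩^(1/n)`. -/
theorem norm_eq_lim_iSup_inner_pow
    {H : Type*} [NormedAddCommGroup H] [InnerProductSpace ℂ H] [CompleteSpace H]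
    (T : H →L[ℂ] H) (hT : T.IsPositive)
    (S : Set H) (hS1 : ∀ ξ ∈ S, ‖ξ‖ = 1)
    (hSsep : ∀ A : H →L[ℂ] H, (∀ ξ ∈ S, A ξ = 0) → A = 0) :
    Tendsto (fun n : ℕ => ⨆ ξ : S, ((inner ℂ (ξ : H) ((T ^ n) (ξ : H)) : ℂ).re) ^ ((n : ℝ)⁻¹))
      atTop (nhds ‖T‖) := by
  set u : ℕ → ℝ :=
    fun n => ⨆ ξ : S, ((inner ℂ (ξ : H) ((T ^ n) (ξ : H)) : ℂ).re) ^ ((n : ℝ)⁻¹) with hu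
  have hterm_nonneg : ∀ (n : ℕ) (ξ : S),
      0 ≤ ((inner ℂ (ξ : H) ((T ^ n) (ξ : H)) : ℂ).re) :=
    fun n ξ => (aux_pow_isPositive T hT n).re_inner_nonneg_right (ξ : H)
  have hrterm_nonneg : ∀ (n : ℕ) (ξ : S),
      0 ≤ ((inner ℂ (ξ : H) ((T ^ n) (ξ : H)) : ℂ).re) ^ ((n : ℝ)⁻¹) :=
    fun n ξ => Real.rpow_nonneg (hterm_nonneg n ξ) _
  have hrterm_le : ∀ (n : ℕ), 1 ≤ n → ∀ (ξ : S),
      ((inner ℂ (ξ : H) ((T ^ n) (ξ : H)) : ℂ).re) ^ ((n : ℝ)⁻¹) ≤ ‖T‖ := by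
    intro n hn ξ
    have h1 : ((inner ℂ (ξ : H) ((T ^ n) (ξ : H)) : ℂ).re) ≤ ‖T‖ ^ n :=
      aux_term_le T hn (hS1 ξ ξ.2)
    calc ((inner ℂ (ξ : H) ((T ^ n) (ξ : H)) : ℂ).re) ^ ((n : ℝ)⁻¹)
        ≤ (‖T‖ ^ n) ^ ((n : ℝ)⁻¹) :=
          Real.rpow_le_rpow (hterm_nonneg n ξ) h1 (by positivity)
      _ = ‖T‖ := aux_rpow_pow (norm_nonneg T) hn
  have hu_nonneg : ∀ n, 0 ≤ u n := fun n => Real.iSup_nonneg (hrterm_nonneg n)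
  have hu_le : ∀ n, 1 ≤ n → u n ≤ ‖T‖ := fun n hn =>
    Real.iSup_le (hrterm_le n hn) (norm_nonneg T)
  rw [tendsto_order]
  constructor
  · -- lower bound
    intro b hb
    rcases lt_or_ge b 0 with hb0 | hb0
    · filter_upwards with n
      exact lt_of_lt_of_le hb0 (hu_nonneg n)
    have hTpos : 0 < ‖T‖ := lt_of_le_of_lt hb0 hb
    set ε : ℝ := min ((‖T‖ - b) / 2) (‖T‖ / 2) with hε
    have hε0 : 0 < ε := by
      apply lt_min (by linarith) (by linarith)
    have hεT : ε < ‖T‖ := by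
      calc ε ≤ ‖T‖ / 2 := min_le_right _ _
        _ < ‖T‖ := by linarith
    have hbT : b < ‖T‖ - ε := by
      have : ε ≤ (‖T‖ - b) / 2 := min_le_left _ _
      linarith
    obtain ⟨c, hc0, ξ₀, hξ₀S, hbound⟩ := aux_lower T hT S hSsep hε0 hεT
    have hrpos : 0 < ‖T‖ - ε := by linarith
    -- (‖T‖ - ε) * c ^ (n⁻¹) → ‖T‖ - ε > b
    have htend : Tendsto (fun n : ℕ => (‖T‖ - ε) * c ^ ((n : ℝ)⁻¹)) atTop
        (nhds (‖T‖ - ε)) := by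
      have h1 : Tendsto (fun n : ℕ => ((n : ℝ))⁻¹) atTop (nhds 0) :=
        tendsto_inv_atTop_zero.comp tendsto_natCast_atTop_atTop
      have h2 : Tendsto (fun n : ℕ => c ^ ((n : ℝ)⁻¹)) atTop (nhds 1) := by
        have h3 := (Real.continuousAt_const_rpow (a := c) (b := 0) hc0.ne').tendsto.comp h1
        simpa [Function.comp_def] using h3
      have := tendsto_const_nhds.mul h2 (f := fun _ : ℕ => ‖T‖ - ε) (x := atTop)
      simpa using this
    filter_upwards [htend.eventually (eventually_gt_nhds hbT), eventually_ge_atTop 1]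
      with n hn1 hn2
    refine lt_of_lt_of_le hn1 ?_
    -- (‖T‖ - ε) * c ^ (n⁻¹) ≤ u n
    have key : ((‖T‖ - ε) ^ n * c) ^ ((n : ℝ)⁻¹)
        ≤ ((inner ℂ (ξ₀ : H) ((T ^ n) (ξ₀ : H)) : ℂ).re) ^ ((n : ℝ)⁻¹) :=
      Real.rpow_le_rpow (by positivity) (hbound n) (by positivity)
    have heq : ((‖T‖ - ε) ^ n * c) ^ ((n : ℝ)⁻¹) = (‖T‖ - ε) * c ^ ((n : ℝ)⁻¹) := by
      rw [Real.mul_rpow (by positivity) hc0.le, aux_rpow_pow hrpos.le hn2]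
    rw [← heq]
    refine key.trans ?_
    have hbdd : BddAbove (Set.range fun ξ : S =>
        ((inner ℂ (ξ : H) ((T ^ n) (ξ : H)) : ℂ).re) ^ ((n : ℝ)⁻¹)) := by
      refine ⟨‖T‖, ?_⟩
      rintro - ⟨ξ, rfl⟩
      exact hrterm_le n hn2 ξ
    exact le_ciSup hbdd (⟨ξ₀, hξ₀S⟩ : S)
  · -- upper bound
    intro b hb
    filter_upwards [eventually_ge_atTop 1] with n hn
    exact lt_of_le_of_lt (hu_le n hn) hb
end

section
/- If T is a positive bounded operator on a Hilbert space and S is a separating family of unit vectors for B(H), then the union over ξ ∈ S of the supports of the spectral measures μ_ξ is dense in the spectrum of T. -/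
open MeasureTheory

/-- The topological support of a measure on `ℝ`: the points all of whose open
neighbourhoods have positive measure. -/
def measureSupport (μ : Measure ℝ) : Set ℝ :=
  {x : ℝ | ∀ U : Set ℝ, IsOpen U → x ∈ U → 0 < μ U}

lemma measureSupport_compl_null (μ : Measure ℝ) : μ (measureSupport μ)ᶜ = 0 := by
  apply measure_null_of_locally_null
  intro x hx
  simp only [measureSupport, Set.mem_compl_iff, Set.mem_setOf_eq] at hx
  push_neg at hx
  obtain ⟨U, hU, hxU, hμU⟩ := hx
  exact ⟨U, mem_nhdsWithin_of_mem_nhds (hU.mem_nhds hxU),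
    le_antisymm (not_lt.mp (by simpa using hμU)) (zero_le)⟩

/-- If `T` is a positive bounded operator on a Hilbert space and `S` is a
separating family of unit vectors, then the union over `ξ ∈ S` of the supports of the
spectral measures `μ_ξ` is dense in the spectrum of `T`. -/
theorem spectrum_subset_closure_iUnion_support
    {H : Type*} [NormedAddCommGroup H] [InnerProductSpace ℂ H] [CompleteSpace H]
    (T : H →L[ℂ] H) (hT : T.IsPositive)
    (S : Set H) (hS1 : ∀ ξ ∈ S, ‖ξ‖ = 1)
    (hSsep : ∀ A : H →L[ℂ] H, (∀ ξ ∈ S, A ξ = 0) → A = 0)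
    (μ : H → Measure ℝ) (hfin : ∀ ξ, IsFiniteMeasure (μ ξ))
    -- each μ ξ is the spectral measure of T at ξ : supported on [0, ‖T‖] with
    -- ⟨ξ, f(T) ξ⟩ = ∫ f dμ_ξ for bounded Borel f, in particular for the powers
    (hsupp : ∀ ξ ∈ S, (μ ξ) (Set.Icc 0 ‖T‖)ᶜ = 0)
    (hmom : ∀ ξ ∈ S, ∀ n : ℕ, (inner ℂ ξ ((T ^ n) ξ) : ℂ).re = ∫ x, x ^ n ∂(μ ξ)) :
    spectrum ℝ T ⊆ closure (⋃ ξ ∈ S, measureSupport (μ ξ)) := by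
  intro l hl
  by_contra hK
  rcases subsingleton_or_nontrivial H with hH | hH
  · haveI : Subsingleton (H →L[ℂ] H) :=
      ⟨fun a b => ContinuousLinearMap.ext fun x => Subsingleton.elim _ _⟩
    rw [spectrum.mem_iff] at hl
    exact hl (isUnit_of_subsingleton _)
  set K := closure (⋃ ξ ∈ S, measureSupport (μ ξ)) with hKdef
  have hsa : IsSelfAdjoint T := hT.isSelfAdjoint
  -- the spectrum is contained in [0, ‖T‖]
  have hspec : spectrum ℝ T ⊆ Set.Icc 0 ‖T‖ := by
    intro x hx
    refine ⟨SpectrumRestricts.nnreal_iff.mp hT.spectrumRestricts x hx, ?_⟩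
    have := spectrum.norm_le_norm_of_mem hx
    rw [Real.norm_eq_abs] at this
    exact (le_abs_self x).trans this
  -- a.e. membership in [0, ‖T‖]
  have hae : ∀ ξ ∈ S, ∀ᵐ x ∂(μ ξ), x ∈ Set.Icc 0 ‖T‖ := by
    intro ξ hξ
    rw [ae_iff]
    exact hsupp ξ hξ
  -- all continuous functions are integrable
  have hint : ∀ ξ ∈ S, ∀ f : ℝ → ℝ, Continuous f → Integrable f (μ ξ) := by
    intro ξ hξ f hf
    haveI := hfin ξ
    obtain ⟨C, hC⟩ := (isCompact_Icc (a := (0:ℝ)) (b := ‖T‖)).exists_bound_of_continuousOn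
      hf.continuousOn
    refine Integrable.mono' (integrable_const C) hf.aestronglyMeasurable ?_
    filter_upwards [hae ξ hξ] with x hx using hC x hx
  -- each μ ξ is a probability measure
  have hmass : ∀ ξ ∈ S, ((μ ξ) Set.univ).toReal = 1 := by
    intro ξ hξ
    have h0 := hmom ξ hξ 0
    simp only [pow_zero, ContinuousLinearMap.one_apply] at h0
    rw [inner_self_eq_norm_sq_to_K, hS1 ξ hξ, integral_const, smul_eq_mul, mul_one] at h0
    simpa [Measure.real] using h0.symm
  -- moments extend to polynomials
  have hpoly : ∀ ξ ∈ S, ∀ p : Polynomial ℝ,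
      (inner ℂ ξ ((Polynomial.aeval T p) ξ) : ℂ).re = ∫ x, p.eval x ∂(μ ξ) := by
    intro ξ hξ p
    induction p using Polynomial.induction_on' with
    | add p q hp hq =>
      rw [map_add, ContinuousLinearMap.add_apply, inner_add_right]
      simp only [Complex.add_re, Polynomial.eval_add]
      rw [hp, hq, integral_add (hint ξ hξ _ p.continuous) (hint ξ hξ _ q.continuous)]
    | monomial n a =>
      rw [Polynomial.aeval_monomial]
      have h1 : (algebraMap ℝ (H →L[ℂ] H) a * T ^ n) ξ = a • ((T ^ n) ξ) := by
        rw [ContinuousLinearMap.mul_apply, Algebra.algebraMap_eq_smul_one,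
          ContinuousLinearMap.smul_apply, ContinuousLinearMap.one_apply]
      rw [h1]
      have h2 : (inner ℂ ξ (a • ((T ^ n) ξ)) : ℂ) = (a : ℂ) * inner ℂ ξ ((T ^ n) ξ) := by
        rw [← Complex.coe_smul, inner_smul_right]
      rw [h2]
      simp only [Polynomial.eval_monomial]
      rw [integral_const_mul, ← hmom ξ hξ n, Complex.mul_re]
      simp
  -- continuous functional calculus vs. integral
  have hcfc : ∀ ξ ∈ S, ∀ f : ℝ → ℝ, Continuous f →
      (inner ℂ ξ ((cfc f T) ξ) : ℂ).re = ∫ x, f x ∂(μ ξ) := by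
    intro ξ hξ f hf
    haveI := hfin ξ
    apply eq_of_forall_dist_le
    intro ε hε
    obtain ⟨p, hp⟩ := exists_polynomial_near_of_continuousOn 0 ‖T‖ f hf.continuousOn (ε/2)
      (by positivity)
    have h1 : ‖cfc f T - Polynomial.aeval T p‖ ≤ ε/2 := by
      rw [← cfc_polynomial p T hsa, ← cfc_sub f p.eval T hf.continuousOn
        p.continuous.continuousOn]
      apply norm_cfc_le (by positivity)
      intro x hx
      have := hp x (hspec hx)
      rw [Real.norm_eq_abs, abs_sub_comm]
      exact this.le
    have h3 : |(inner ℂ ξ ((cfc f T) ξ) : ℂ).re - (inner ℂ ξ ((Polynomial.aeval T p) ξ) : ℂ).re|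
        ≤ ε/2 := by
      have heq : (inner ℂ ξ ((cfc f T) ξ) : ℂ).re - (inner ℂ ξ ((Polynomial.aeval T p) ξ) : ℂ).re
          = (inner ℂ ξ (((cfc f T - Polynomial.aeval T p)) ξ) : ℂ).re := by
        rw [ContinuousLinearMap.sub_apply, inner_sub_right, Complex.sub_re]
      rw [heq]
      calc |(inner ℂ ξ (((cfc f T - Polynomial.aeval T p)) ξ) : ℂ).re|
          ≤ ‖(inner ℂ ξ (((cfc f T - Polynomial.aeval T p)) ξ) : ℂ)‖ := Complex.abs_re_le_norm _
        _ ≤ ‖ξ‖ * ‖(cfc f T - Polynomial.aeval T p) ξ‖ := norm_inner_le_norm _ _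
        _ ≤ ‖ξ‖ * (‖cfc f T - Polynomial.aeval T p‖ * ‖ξ‖) := by
            gcongr
            exact ContinuousLinearMap.le_opNorm _ _
        _ ≤ ε/2 := by
            rw [hS1 ξ hξ, one_mul, mul_one]
            exact h1
    have h2 : |∫ x, p.eval x ∂(μ ξ) - ∫ x, f x ∂(μ ξ)| ≤ ε/2 := by
      rw [← integral_sub (hint ξ hξ _ p.continuous) (hint ξ hξ _ hf)]
      have hb : ∀ᵐ x ∂(μ ξ), ‖p.eval x - f x‖ ≤ ε/2 := by
        filter_upwards [hae ξ hξ] with x hx using (hp x hx).le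
      calc |∫ x, (p.eval x - f x) ∂(μ ξ)|
          ≤ ε/2 * ((μ ξ) Set.univ).toReal := norm_integral_le_of_norm_le_const hb
        _ = ε/2 := by rw [hmass ξ hξ, mul_one]
    rw [Real.dist_eq]
    calc |(inner ℂ ξ ((cfc f T) ξ) : ℂ).re - ∫ x, f x ∂(μ ξ)|
        ≤ |(inner ℂ ξ ((cfc f T) ξ) : ℂ).re - (inner ℂ ξ ((Polynomial.aeval T p) ξ) : ℂ).re|
          + |(inner ℂ ξ ((Polynomial.aeval T p) ξ) : ℂ).re - ∫ x, f x ∂(μ ξ)| := by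
          have := abs_sub_le ((inner ℂ ξ ((cfc f T) ξ) : ℂ).re)
            ((inner ℂ ξ ((Polynomial.aeval T p) ξ) : ℂ).re) (∫ x, f x ∂(μ ξ))
          exact this
      _ ≤ ε/2 + ε/2 := by
          refine add_le_add h3 ?_
          rw [hpoly ξ hξ p]
          exact h2
      _ = ε := by ring
  -- bump function
  obtain ⟨d, hd, hball⟩ : ∃ d > 0, Metric.ball l d ⊆ Kᶜ := by
    rcases Metric.isOpen_iff.mp isClosed_closure.isOpen_compl l hK with ⟨d, hd, h⟩
    exact ⟨d, hd, h⟩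
  set g : ℝ → ℝ := fun x => max (1 - |x - l| / d) 0 with hgdef
  have hgc : Continuous g :=
    ((continuous_const.sub (((continuous_id.sub continuous_const).abs).div_const d)).max
      continuous_const)
  have hgl : g l = 1 := by simp [hgdef]
  have hg0 : ∀ x, x ∉ Metric.ball l d → g x = 0 := by
    intro x hx
    rw [Metric.mem_ball, Real.dist_eq, not_lt] at hx
    have h1 : 1 - |x - l| / d ≤ 0 := by
      rw [sub_nonpos, le_div_iff₀ hd]
      linarith
    simp [hgdef, max_eq_right h1]
  -- cfc g T kills every ξ ∈ S
  have hzero : ∀ ξ ∈ S, cfc g T ξ = 0 := by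
    intro ξ hξ
    have hsa' : IsSelfAdjoint (cfc g T) := cfc_predicate g T
    have key : (inner ℂ ξ ((cfc (fun x => g x * g x) T) ξ) : ℂ).re = 0 := by
      rw [hcfc ξ hξ (fun x => g x * g x) (hgc.mul hgc)]
      apply integral_eq_zero_of_ae
      have hnull : (μ ξ) {x | ¬ g x * g x = 0} = 0 := by
        refine measure_mono_null ?_ (measureSupport_compl_null (μ ξ))
        intro x hx
        simp only [Set.mem_setOf_eq] at hx
        intro hxs
        apply hx
        have hxK : x ∈ K := subset_closure (Set.mem_biUnion hξ hxs)
        have : x ∉ Metric.ball l d := fun h => hball h hxK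
        rw [hg0 x this, mul_zero]
      exact (ae_iff).mpr hnull
    have h1 : (inner ℂ (cfc g T ξ) (cfc g T ξ) : ℂ)
        = inner ℂ ξ ((cfc g T) ((cfc g T) ξ)) :=
      (ContinuousLinearMap.isSelfAdjoint_iff_isSymmetric.mp hsa') ξ (cfc g T ξ)
    have h2 : (cfc g T) ((cfc g T) ξ) = (cfc (fun x => g x * g x) T) ξ := by
      rw [cfc_mul g g T hgc.continuousOn hgc.continuousOn]
      rfl
    have hv : ((inner ℂ (cfc g T ξ) (cfc g T ξ)) : ℂ).re = 0 := by
      rw [h1, h2, key]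
    have hz : (inner ℂ (cfc g T ξ) (cfc g T ξ) : ℂ) = 0 := by
      apply Complex.ext
      · simpa using hv
      · have := inner_self_im (𝕜 := ℂ) (cfc g T ξ)
        rw [RCLike.im_to_complex] at this
        simpa using this
    exact inner_self_eq_zero.mp hz
  have hgT : cfc g T = 0 := hSsep _ hzero
  have hmem : (1 : ℝ) ∈ spectrum ℝ (cfc g T) := by
    rw [cfc_map_spectrum g T hsa hgc.continuousOn]
    exact ⟨l, hl, hgl⟩
  haveI : Nontrivial (H →L[ℂ] H) := by
    obtain ⟨x, hx⟩ := exists_ne (0 : H)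
    exact ⟨1, 0, fun h => hx (by simpa using DFunLike.congr_fun h x)⟩
  rw [hgT, spectrum.zero_eq] at hmem
  simp at hmem
end

section
/- Let G be a locally compact group, ρ a unitary representation of G on a Hilbert space H(ρ) possessing a separating set P of norm-one G-positive vectors (a vector ξ is G-positive if ⟨ξ, ρ(s)ξ⟩ ≥ 0 for all s ∈ G), and let π be any unitary representation of G on H(π). Then for every probability measure μ on G, ‖(ρ⊗π)(μ)‖ ≤ ‖ρ(μ)‖. -/
open MeasureTheory ContinuousLinearMap
open scoped ComplexOrder

namespace Stmt3Aux

noncomputable section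

local notation "⟪" x ", " y "⟫" => @inner ℂ _ _ x y

set_option linter.unusedSectionVars false
set_option linter.unusedVariables false



/-- A real dyadic-power comparison lemma. -/
lemma dyadic_le {x y C K : ℝ} (hx : 0 ≤ x) (hy : 0 < y) (hC : 0 ≤ C) (hK : 0 ≤ K)
    (h : ∀ k : ℕ, x ^ (2 ^ k) ≤ y ^ (2 ^ k - 1) * (K * C ^ (2 ^ k))) : x ≤ C * y := by
  rcases eq_or_lt_of_le hC with hC0 | hC0
  · have h0 := h 0
    simp [← hC0] at h0
    have : x = 0 := le_antisymm h0 hx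
    rw [this, ← hC0, zero_mul]
  · by_contra hxy
    push_neg at hxy
    set r := x / (C * y) with hr
    have hCy : 0 < C * y := mul_pos hC0 hy
    have hr1 : 1 < r := (one_lt_div hCy).2 hxy
    have hbound : ∀ k : ℕ, r ^ (2 ^ k) ≤ K / y := by
      intro k
      have h2k1 : 1 ≤ 2 ^ k := Nat.one_le_two_pow
      have hsplit : y ^ (2 ^ k) = y ^ (2 ^ k - 1) * y := by
        conv_lhs => rw [← Nat.sub_add_cancel h2k1]
        rw [pow_succ]
      rw [hr, div_pow, div_le_div_iff₀ (pow_pos hCy _) hy]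
      calc x ^ 2 ^ k * y ≤ (y ^ (2 ^ k - 1) * (K * C ^ 2 ^ k)) * y :=
            mul_le_mul_of_nonneg_right (h k) hy.le
        _ = K * (C * y) ^ 2 ^ k := by rw [mul_pow, hsplit]; ring
    obtain ⟨n, hn⟩ := pow_unbounded_of_one_lt (K / y) hr1
    have hmono : r ^ n ≤ r ^ (2 ^ n) := pow_le_pow_right₀ hr1.le (Nat.le_of_lt (Nat.lt_two_pow_self))
    exact absurd (le_trans hmono (hbound n)) (not_le.2 hn)

variable {H : Type*} [NormedAddCommGroup H] [InnerProductSpace ℂ H] [CompleteSpace H]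

/-- dyadic argument for a self-adjoint operator -/
lemma opnorm_apply_le_of_dyadic (S : H →L[ℂ] H) (hS : IsSelfAdjoint S) {C K : ℝ}
    (hC : 0 ≤ C) (hK : 0 ≤ K) (v : H)
    (hv : ∀ n : ℕ, ‖(S ^ n) v‖ ≤ K * C ^ n) : ‖S v‖ ≤ C * ‖v‖ := by
  rcases eq_or_ne v 0 with rfl | hv0
  · simp
  have hy : 0 < ‖v‖ := norm_pos_iff.2 hv0
  have hadj : ∀ m : ℕ, ContinuousLinearMap.adjoint (S ^ m) = S ^ m := by
    intro m
    rw [← ContinuousLinearMap.star_eq_adjoint]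
    exact hS.pow m
  have hinner : ∀ (m : ℕ) (w : H), ⟪w, (S ^ (m + m)) w⟫ = ⟪(S ^ m) w, (S ^ m) w⟫ := by
    intro m w
    have h := ContinuousLinearMap.adjoint_inner_left (S ^ m) ((S ^ m) w) w
    rw [hadj] at h
    rw [pow_add, ContinuousLinearMap.mul_apply, ← h]
  have hsq : ∀ m : ℕ, ‖(S ^ m) v‖ ^ 2 ≤ ‖v‖ * ‖(S ^ (m + m)) v‖ := by
    intro m
    have h1 : (‖(S ^ m) v‖ : ℝ) ^ 2 = ‖⟪v, (S ^ (m + m)) v⟫‖ := by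
      rw [hinner m v, inner_self_eq_norm_sq_to_K]
      simp [norm_pow]
    rw [h1]
    calc ‖⟪v, (S ^ (m + m)) v⟫‖ ≤ ‖v‖ * ‖(S ^ (m + m)) v‖ := norm_inner_le_norm _ _
      _ = _ := rfl
  have hdy : ∀ k : ℕ, ‖S v‖ ^ (2 ^ k) ≤ ‖v‖ ^ (2 ^ k - 1) * ‖(S ^ (2 ^ k)) v‖ := by
    intro k
    induction k with
    | zero => simp
    | succ k ihk =>
      have h2k1 : 1 ≤ 2 ^ k := Nat.one_le_two_pow
      have hpow : ‖S v‖ ^ (2 ^ (k + 1)) = (‖S v‖ ^ (2 ^ k)) ^ 2 := by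
        rw [← pow_mul, pow_succ]
      have he : 2 ^ k + 2 ^ k = 2 ^ (k + 1) := by omega
      have hexp : (2 ^ k - 1) * 2 + 1 = 2 ^ (k + 1) - 1 := by omega
      calc ‖S v‖ ^ (2 ^ (k + 1)) = (‖S v‖ ^ (2 ^ k)) ^ 2 := hpow
        _ ≤ (‖v‖ ^ (2 ^ k - 1) * ‖(S ^ (2 ^ k)) v‖) ^ 2 :=
            pow_le_pow_left₀ (by positivity) ihk 2
        _ = (‖v‖ ^ (2 ^ k - 1)) ^ 2 * ‖(S ^ (2 ^ k)) v‖ ^ 2 := mul_pow _ _ 2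
        _ ≤ (‖v‖ ^ (2 ^ k - 1)) ^ 2 * (‖v‖ * ‖(S ^ (2 ^ k + 2 ^ k)) v‖) :=
            mul_le_mul_of_nonneg_left (hsq (2 ^ k)) (by positivity)
        _ = ‖v‖ ^ ((2 ^ k - 1) * 2 + 1) * ‖(S ^ (2 ^ k + 2 ^ k)) v‖ := by
            rw [← pow_mul, pow_succ]; ring
        _ = ‖v‖ ^ (2 ^ (k + 1) - 1) * ‖(S ^ (2 ^ (k + 1))) v‖ := by rw [hexp, he]
  refine dyadic_le (norm_nonneg _) hy hC hK (fun k => le_trans (hdy k) ?_)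
  exact mul_le_mul_of_nonneg_left (hv (2 ^ k)) (by positivity)

section GroupPart



variable {G : Type*} [Group G] [TopologicalSpace G] [IsTopologicalGroup G]
  [MeasurableSpace G] [BorelSpace G]

/-- Complex averaging operator. -/
def Qc (μ : Measure G) (f : G → ℂ) : G → ℂ :=
  fun g => ∫ s, ∫ t, f (g * s⁻¹ * t) ∂μ ∂μ

/-- Real averaging operator. -/
def Qr (μ : Measure G) (h : G → ℝ) : G → ℝ :=
  fun g => ∫ s, ∫ t, h (g * s⁻¹ * t) ∂μ ∂μ

lemma Qr_step {μ : Measure G} [IsProbabilityMeasure μ] {h : G → ℝ} {M : ℝ}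
    (hc : Continuous h) (h0 : ∀ g, 0 ≤ h g) (hM : ∀ g, h g ≤ M)
    (hI : ∀ g : G, Continuous fun s => ∫ t, h (g * s⁻¹ * t) ∂μ) :
    (∀ g, 0 ≤ Qr μ h g) ∧ (∀ g, Qr μ h g ≤ M) ∧
      ∀ f : G → ℂ, (∀ g, ‖f g‖ ≤ h g) → ∀ g, ‖Qc μ f g‖ ≤ Qr μ h g := by
  have habs : ∀ g, ‖h g‖ ≤ M := fun g => by
    rw [Real.norm_eq_abs, abs_of_nonneg (h0 g)]; exact hM g
  have hInt : ∀ x : G, Integrable (fun t => h (x * t)) μ := fun x =>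
    (integrable_const M).mono'
      ((hc.comp (continuous_mul_left x)).aestronglyMeasurable)
      (ae_of_all _ fun t => habs (x * t))
  have hK0 : ∀ g s : G, 0 ≤ ∫ t, h (g * s⁻¹ * t) ∂μ := fun g s =>
    integral_nonneg fun t => h0 _
  have hKM : ∀ g s : G, (∫ t, h (g * s⁻¹ * t) ∂μ) ≤ M := by
    intro g s
    calc (∫ t, h (g * s⁻¹ * t) ∂μ) ≤ ∫ _, M ∂μ :=
          integral_mono (hInt (g * s⁻¹)) (integrable_const M) (fun t => hM _)
      _ = M := by simp
  have hKint : ∀ g : G, Integrable (fun s => ∫ t, h (g * s⁻¹ * t) ∂μ) μ := fun g =>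
    (integrable_const M).mono' (hI g).aestronglyMeasurable
      (ae_of_all _ fun s => by
        rw [Real.norm_eq_abs, abs_of_nonneg (hK0 g s)]; exact hKM g s)
  refine ⟨?_, ?_, ?_⟩
  · intro g; exact integral_nonneg fun s => hK0 g s
  · intro g
    calc Qr μ h g ≤ ∫ _, M ∂μ := integral_mono (hKint g) (integrable_const M) (fun s => hKM g s)
      _ = M := by simp
  · intro f hfh g
    calc ‖Qc μ f g‖ ≤ ∫ s, ‖∫ t, f (g * s⁻¹ * t) ∂μ‖ ∂μ := norm_integral_le_integral_norm _
      _ ≤ ∫ s, ∫ t, h (g * s⁻¹ * t) ∂μ ∂μ := by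
          refine integral_mono_of_nonneg (ae_of_all _ fun s => norm_nonneg _) (hKint g)
            (ae_of_all _ fun s => ?_)
          calc ‖∫ t, f (g * s⁻¹ * t) ∂μ‖ ≤ ∫ t, ‖f (g * s⁻¹ * t)‖ ∂μ :=
                norm_integral_le_integral_norm _
            _ ≤ ∫ t, h (g * s⁻¹ * t) ∂μ :=
                integral_mono_of_nonneg (ae_of_all _ fun t => norm_nonneg _)
                  (hInt (g * s⁻¹)) (ae_of_all _ fun t => hfh _)
      _ = Qr μ h g := rfl

lemma Qiter {μ : Measure G} [IsProbabilityMeasure μ] {h : G → ℝ} {M : ℝ}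
    (hcont : ∀ n : ℕ, Continuous ((Qr μ)^[n] h))
    (h0 : ∀ g, 0 ≤ h g) (hM : ∀ g, h g ≤ M)
    (hI : ∀ (n : ℕ) (g : G), Continuous fun s => ∫ t, (Qr μ)^[n] h (g * s⁻¹ * t) ∂μ)
    (f : G → ℂ) (hfh : ∀ g, ‖f g‖ ≤ h g) :
    ∀ n : ℕ, (∀ g, 0 ≤ (Qr μ)^[n] h g) ∧ (∀ g, (Qr μ)^[n] h g ≤ M)
      ∧ ∀ g, ‖(Qc μ)^[n] f g‖ ≤ (Qr μ)^[n] h g := by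
  intro n
  induction n with
  | zero => exact ⟨h0, hM, hfh⟩
  | succ n ih =>
    obtain ⟨ih0, ihM, ihf⟩ := ih
    obtain ⟨h0', hM', hcomp⟩ := Qr_step (hcont n) ih0 ihM (hI n)
    rw [Function.iterate_succ_apply', Function.iterate_succ_apply']
    exact ⟨h0', hM', hcomp _ ihf⟩

lemma Qc_ofReal (μ : Measure G) (h : G → ℝ) :
    Qc μ (fun g => ((h g : ℝ) : ℂ)) = fun g => ((Qr μ h g : ℝ) : ℂ) := by
  funext g
  calc Qc μ (fun g => ((h g : ℝ) : ℂ)) g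
      = ∫ s, ((∫ t, h (g * s⁻¹ * t) ∂μ : ℝ) : ℂ) ∂μ := by
        refine integral_congr_ae (ae_of_all _ fun s => ?_)
        exact integral_ofReal
    _ = ((Qr μ h g : ℝ) : ℂ) := integral_ofReal

lemma Qc_ofReal_iter (μ : Measure G) (h : G → ℝ) (n : ℕ) :
    (Qc μ)^[n] (fun g => ((h g : ℝ) : ℂ)) = fun g => (((Qr μ)^[n] h g : ℝ) : ℂ) := by
  induction n with
  | zero => rfl
  | succ n ih =>
    rw [Function.iterate_succ_apply', Function.iterate_succ_apply', ih, Qc_ofReal]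

lemma Qr_const_mul_iter (μ : Measure G) (c : ℝ) (h : G → ℝ) (n : ℕ) :
    (Qr μ)^[n] (fun g => c * h g) = fun g => c * (Qr μ)^[n] h g := by
  induction n with
  | zero => rfl
  | succ n ih =>
    rw [Function.iterate_succ_apply', Function.iterate_succ_apply', ih]
    funext g
    calc Qr μ (fun g => c * (Qr μ)^[n] h g) g
        = ∫ s, c * ∫ t, (Qr μ)^[n] h (g * s⁻¹ * t) ∂μ ∂μ := by
          refine integral_congr_ae (ae_of_all _ fun s => ?_)
          exact integral_const_mul c _
      _ = c * Qr μ ((Qr μ)^[n] h) g := integral_const_mul c _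

variable {H : Type*} [NormedAddCommGroup H] [InnerProductSpace ℂ H] [CompleteSpace H]

lemma rep_norm (σ : G →* (H →L[ℂ] H)) (hσu : ∀ s, ContinuousLinearMap.adjoint (σ s) = σ s⁻¹)
    (s : G) (x : H) : ‖σ s x‖ = ‖x‖ := by
  have h : ⟪σ s x, σ s x⟫ = ⟪x, x⟫ := by
    have e : ContinuousLinearMap.adjoint (σ s⁻¹) = σ s := by rw [hσu, inv_inv]
    calc ⟪σ s x, σ s x⟫ = ⟪(ContinuousLinearMap.adjoint (σ s⁻¹)) x, σ s x⟫ := by rw [e]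
      _ = ⟪x, σ s⁻¹ (σ s x)⟫ := ContinuousLinearMap.adjoint_inner_left _ _ _
      _ = ⟪x, (σ s⁻¹ * σ s) x⟫ := rfl
      _ = ⟪x, x⟫ := by rw [← map_mul, inv_mul_cancel, map_one]; rfl
  rw [inner_self_eq_norm_sq_to_K, inner_self_eq_norm_sq_to_K] at h
  have h2 : (‖σ s x‖ : ℝ) ^ 2 = ‖x‖ ^ 2 := by exact_mod_cast h
  rw [← Real.sqrt_sq (norm_nonneg (σ s x)), ← Real.sqrt_sq (norm_nonneg x), h2]

lemma rep_identity (σ : G →* (H →L[ℂ] H))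
    (hσu : ∀ s, ContinuousLinearMap.adjoint (σ s) = σ s⁻¹)
    (μ : Measure G) (T : H →L[ℂ] H)
    (hT : ∀ x y : H, ⟪x, T y⟫ = ∫ s, ⟪x, σ s y⟫ ∂μ) (x : H) :
    ∀ (n : ℕ) (g : G),
      ⟪x, σ g (((ContinuousLinearMap.adjoint T ∘L T) ^ n) x)⟫
        = (Qc μ)^[n] (fun g => ⟪x, σ g x⟫) g := by
  intro n
  induction n with
  | zero => intro g; simp
  | succ n ih =>
    intro g
    set A := ContinuousLinearMap.adjoint T ∘L T with hA
    set y := (A ^ n) x with hy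
    have hpow : (A ^ (n + 1)) x = (ContinuousLinearMap.adjoint T) (T y) := by
      rw [pow_succ']; rfl
    rw [hpow]
    have h1 : ⟪x, σ g ((ContinuousLinearMap.adjoint T) (T y))⟫ = ⟪T ((σ g⁻¹) x), T y⟫ := by
      have hco : σ g ∘L ContinuousLinearMap.adjoint T
          = ContinuousLinearMap.adjoint (T ∘L σ g⁻¹) := by
        rw [ContinuousLinearMap.adjoint_comp, hσu, inv_inv]
      calc ⟪x, σ g ((ContinuousLinearMap.adjoint T) (T y))⟫
          = ⟪x, (σ g ∘L ContinuousLinearMap.adjoint T) (T y)⟫ := rfl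
        _ = ⟪x, (ContinuousLinearMap.adjoint (T ∘L σ g⁻¹)) (T y)⟫ := by rw [hco]
        _ = ⟪(T ∘L σ g⁻¹) x, T y⟫ := ContinuousLinearMap.adjoint_inner_right _ _ _
        _ = ⟪T ((σ g⁻¹) x), T y⟫ := rfl
    rw [h1]
    have h2 : ⟪T ((σ g⁻¹) x), T y⟫ = ∫ s, ⟪σ s ((σ g⁻¹) x), T y⟫ ∂μ := by
      rw [← inner_conj_symm (T ((σ g⁻¹) x)) (T y)]
      rw [hT (T y) ((σ g⁻¹) x), ← integral_conj]
      simp only [inner_conj_symm]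
    rw [h2]
    have h3 : ∀ s : G, ⟪σ s ((σ g⁻¹) x), T y⟫ = ∫ t, ⟪x, σ (g * s⁻¹ * t) y⟫ ∂μ := by
      intro s
      rw [hT]
      refine integral_congr_ae (ae_of_all _ fun t => ?_)
      dsimp only
      have e1 : σ s ((σ g⁻¹) x) = (σ (s * g⁻¹)) x := by rw [map_mul]; rfl
      have e2 : σ (s * g⁻¹) = ContinuousLinearMap.adjoint (σ (g * s⁻¹)) := by
        rw [hσu, mul_inv_rev, inv_inv]
      rw [e1, e2, ContinuousLinearMap.adjoint_inner_left]
      have e3 : σ (g * s⁻¹ * t) = σ (g * s⁻¹) ∘L σ t := by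
        rw [map_mul σ (g * s⁻¹) t]; rfl
      rw [e3]
      rfl
    calc (∫ s, ⟪σ s ((σ g⁻¹) x), T y⟫ ∂μ)
        = ∫ s, ∫ t, (Qc μ)^[n] (fun g => ⟪x, σ g x⟫) (g * s⁻¹ * t) ∂μ ∂μ := by
          refine integral_congr_ae (ae_of_all _ fun s => ?_)
          dsimp only
          rw [h3 s]
          refine integral_congr_ae (ae_of_all _ fun t => ?_)
          dsimp only
          exact ih (g * s⁻¹ * t)
      _ = (Qc μ)^[n + 1] (fun g => ⟪x, σ g x⟫) g := by
          rw [Function.iterate_succ_apply']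
          rfl

end GroupPart

end

end Stmt3Aux

open Stmt3Aux

open scoped ComplexOrder

/-- If `ρ` is a unitary representation of a locally compact group `G`
possessing a separating set `P` of norm-one `G`-positive vectors, and `π` is any unitary
representation of `G`, then for every probability measure `μ` on `G`,
`‖(ρ ⊗ π)(μ)‖ ≤ ‖ρ(μ)‖`. The Hilbert space tensor product `Hρ ⊗ Hπ` is axiomatized by a
bilinear map `tp` with the characteristic inner ℂ product identity and dense span. -/
theorem norm_tensor_integral_le_of_positive_separating
    {G : Type*} [Group G] [TopologicalSpace G] [IsTopologicalGroup G] [LocallyCompactSpace G]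
    [MeasurableSpace G] [BorelSpace G]
    {Hρ Hπ Hτ : Type*}
    [NormedAddCommGroup Hρ] [InnerProductSpace ℂ Hρ] [CompleteSpace Hρ]
    [NormedAddCommGroup Hπ] [InnerProductSpace ℂ Hπ] [CompleteSpace Hπ]
    [NormedAddCommGroup Hτ] [InnerProductSpace ℂ Hτ] [CompleteSpace Hτ]
    -- ρ is a (strongly continuous) unitary representation
    (ρ : G →* (Hρ →L[ℂ] Hρ))
    (hρu : ∀ s, ContinuousLinearMap.adjoint (ρ s) = ρ s⁻¹)
    (hρc : ∀ ξ : Hρ, Continuous fun s => ρ s ξ)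
    -- π is a (strongly continuous) unitary representation
    (π : G →* (Hπ →L[ℂ] Hπ))
    (hπu : ∀ s, ContinuousLinearMap.adjoint (π s) = π s⁻¹)
    (hπc : ∀ ξ : Hπ, Continuous fun s => π s ξ)
    -- P is a separating set of norm-one G-positive vectors for ρ
    (P : Set Hρ) (hP1 : ∀ ξ ∈ P, ‖ξ‖ = 1)
    (hPsep : ∀ A : Hρ →L[ℂ] Hρ, (∀ ξ ∈ P, A ξ = 0) → A = 0)
    (hPpos : ∀ ξ ∈ P, ∀ s : G, 0 ≤ (inner ℂ ξ ((ρ s) ξ) : ℂ))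
    -- Hτ together with tp is the Hilbert space tensor product Hρ ⊗ Hπ
    (tp : Hρ →L[ℂ] Hπ →L[ℂ] Hτ)
    (htp_inner : ∀ (ξ ξ' : Hρ) (η η' : Hπ),
      (inner ℂ (tp ξ η) (tp ξ' η') : ℂ) = (inner ℂ ξ ξ' : ℂ) * (inner ℂ η η' : ℂ))
    (htp_dense : Dense
      ((Submodule.span ℂ (Set.range fun v : Hρ × Hπ => tp v.1 v.2) : Submodule ℂ Hτ) : Set Hτ))
    -- τ is the tensor product representation ρ ⊗ π
    (τ : G →* (Hτ →L[ℂ] Hτ))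
    (hτ : ∀ (s : G) (ξ : Hρ) (η : Hπ), τ s (tp ξ η) = tp (ρ s ξ) (π s η))
    -- μ is a probability measure, and Tρ = ρ(μ), Tτ = (ρ ⊗ π)(μ) as weak integrals
    (μ : Measure G) [IsProbabilityMeasure μ]
    (Tρ : Hρ →L[ℂ] Hρ)
    (hTρ : ∀ ξ η : Hρ, (inner ℂ ξ (Tρ η) : ℂ) = ∫ s, (inner ℂ ξ (ρ s η) : ℂ) ∂μ)
    (Tτ : Hτ →L[ℂ] Hτ)
    (hTτ : ∀ ξ η : Hτ, (inner ℂ ξ (Tτ η) : ℂ) = ∫ s, (inner ℂ ξ (τ s η) : ℂ) ∂μ) :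
    ‖Tτ‖ ≤ ‖Tρ‖ := by
  classical
  -- Step 1: τ is unitary (adjoint of τ s is τ s⁻¹), via density of elementary tensors.
  have hz : ∀ w : Hτ, (∀ (ξ : Hρ) (η : Hπ), (inner ℂ w (tp ξ η) : ℂ) = 0) → w = 0 := by
    intro w hw
    have h0 : (innerSL ℂ w : Hτ →L[ℂ] ℂ) = 0 := by
      apply ContinuousLinearMap.ext_on htp_dense
      rintro _ ⟨⟨ξ, η⟩, rfl⟩
      simpa using hw ξ η
    have h1 : (inner ℂ w w : ℂ) = 0 := by
      have := DFunLike.congr_fun h0 w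
      simpa using this
    exact inner_self_eq_zero.1 h1
  have hext : ∀ A B : Hτ →L[ℂ] Hτ,
      (∀ (ξ ξ' : Hρ) (η η' : Hπ),
        (inner ℂ (tp ξ' η') (A (tp ξ η)) : ℂ) = (inner ℂ (tp ξ' η') (B (tp ξ η)) : ℂ)) → A = B := by
    intro A B hAB
    apply ContinuousLinearMap.ext_on htp_dense
    rintro _ ⟨⟨ξ, η⟩, rfl⟩
    dsimp only
    have hzero : ∀ (ξ' : Hρ) (η' : Hπ),
        (inner ℂ (A (tp ξ η) - B (tp ξ η)) (tp ξ' η') : ℂ) = 0 := by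
      intro ξ' η'
      rw [inner_sub_left]
      have h' := congrArg (starRingEnd ℂ) (hAB ξ ξ' η η')
      rw [inner_conj_symm, inner_conj_symm] at h'
      rw [h', sub_self]
    exact sub_eq_zero.1 (hz _ hzero)
  have hτu : ∀ s, ContinuousLinearMap.adjoint (τ s) = τ s⁻¹ := by
    intro s
    apply hext
    intro ξ ξ' η η'
    rw [ContinuousLinearMap.adjoint_inner_right, hτ, hτ, htp_inner, htp_inner,
      ← hρu s, ← hπu s, ContinuousLinearMap.adjoint_inner_right,
      ContinuousLinearMap.adjoint_inner_right]
  -- Step 2: density of the span of P, and of the span of elementary tensors with P entries.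
  have hPdense : Dense ((Submodule.span ℂ P : Submodule ℂ Hρ) : Set Hρ) := by
    set K := (Submodule.span ℂ P).topologicalClosure with hKdef
    haveI : CompleteSpace K := (Submodule.isClosed_topologicalClosure _).completeSpace_coe
    have hproj : (ContinuousLinearMap.id ℂ Hρ) - K.subtypeL.comp (K.orthogonalProjection) = 0 := by
      apply hPsep
      intro ξ hξ
      have hmem : ξ ∈ K := (Submodule.le_topologicalClosure _) (Submodule.subset_span hξ)
      have hfix : (K.orthogonalProjection ξ : Hρ) = ξ := K.starProjection_eq_self_iff.2 hmem
      simp [ContinuousLinearMap.sub_apply, hfix]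
    have hKtop : ∀ ξ : Hρ, ξ ∈ K := by
      intro ξ
      have h := DFunLike.congr_fun hproj ξ
      simp only [ContinuousLinearMap.sub_apply, ContinuousLinearMap.coe_id', id_eq,
        ContinuousLinearMap.comp_apply, Submodule.subtypeL_apply,
        ContinuousLinearMap.zero_apply] at h
      have h2 : ξ = (K.orthogonalProjection ξ : Hρ) := sub_eq_zero.1 h
      rw [h2]
      exact (K.orthogonalProjection ξ).2
    rw [dense_iff_closure_eq, ← Submodule.topologicalClosure_coe]
    exact Set.eq_univ_of_forall hKtop
  set Dset : Set Hτ := {w : Hτ | ∃ ξ ∈ P, ∃ η : Hπ, w = tp ξ η} with hDdef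
  have hDdense : Dense ((Submodule.span ℂ Dset : Submodule ℂ Hτ) : Set Hτ) := by
    set M := (Submodule.span ℂ Dset).topologicalClosure with hMdef
    have hMclosed : IsClosed (M : Set Hτ) := Submodule.isClosed_topologicalClosure _
    have helem : ∀ (ξ : Hρ) (η : Hπ), tp ξ η ∈ M := by
      intro ξ η
      set N : Submodule ℂ Hρ := M.comap ((tp.flip η : Hρ →L[ℂ] Hτ) : Hρ →ₗ[ℂ] Hτ) with hNdef
      have hNclosed : IsClosed (N : Set Hρ) := by
        have h1 : (N : Set Hρ) = (tp.flip η) ⁻¹' (M : Set Hτ) := rfl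
        rw [h1]
        exact hMclosed.preimage (tp.flip η).continuous
      have hPN : Submodule.span ℂ P ≤ N := by
        rw [Submodule.span_le]
        intro ξ' hξ'
        have hD : tp ξ' η ∈ Dset := ⟨ξ', hξ', η, rfl⟩
        have h2 : tp ξ' η ∈ M := (Submodule.le_topologicalClosure _) (Submodule.subset_span hD)
        show ((tp.flip η : Hρ →L[ℂ] Hτ) : Hρ →ₗ[ℂ] Hτ) ξ' ∈ M
        simpa using h2
      have hξN : ξ ∈ N := by
        have hclosure : closure ((Submodule.span ℂ P : Submodule ℂ Hρ) : Set Hρ)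
            ⊆ (N : Set Hρ) := closure_minimal hPN hNclosed
        have hmem : ξ ∈ closure ((Submodule.span ℂ P : Submodule ℂ Hρ) : Set Hρ) := hPdense ξ
        exact hclosure hmem
      exact hξN
    have hle : Submodule.span ℂ (Set.range fun v : Hρ × Hπ => tp v.1 v.2) ≤ M := by
      rw [Submodule.span_le]
      rintro _ ⟨⟨ξ, η⟩, rfl⟩
      exact helem ξ η
    have hMuniv : ∀ w : Hτ, w ∈ M := by
      intro w
      have h1 : closure ((Submodule.span ℂ (Set.range fun v : Hρ × Hπ => tp v.1 v.2) :
          Submodule ℂ Hτ) : Set Hτ) ⊆ (M : Set Hτ) :=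
        closure_minimal hle hMclosed
      exact h1 (htp_dense w)
    rw [dense_iff_closure_eq, ← Submodule.topologicalClosure_coe]
    exact Set.eq_univ_of_forall hMuniv
  -- Step 3: operators and constants
  set C : ℝ := ‖Tρ‖ * ‖Tρ‖ with hCdef
  have hC : 0 ≤ C := mul_nonneg (norm_nonneg _) (norm_nonneg _)
  set S : Hτ →L[ℂ] Hτ := ContinuousLinearMap.adjoint Tτ ∘L Tτ with hSdef
  set R : Hρ →L[ℂ] Hρ := ContinuousLinearMap.adjoint Tρ ∘L Tρ with hRdef
  have hSsa : IsSelfAdjoint S := by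
    show star S = S
    rw [ContinuousLinearMap.star_eq_adjoint, hSdef, ContinuousLinearMap.adjoint_comp,
      ContinuousLinearMap.adjoint_adjoint]
  have hRnorm : ∀ (ζ : Hρ) (n : ℕ), ‖(R ^ n) ζ‖ ≤ C ^ n * ‖ζ‖ := by
    intro ζ n
    induction n with
    | zero => simp
    | succ n ihn =>
      have hRC : ‖R‖ = C := ContinuousLinearMap.norm_adjoint_comp_self Tρ
      calc ‖(R ^ (n + 1)) ζ‖ = ‖R ((R ^ n) ζ)‖ := by rw [pow_succ']; rfl
        _ ≤ ‖R‖ * ‖(R ^ n) ζ‖ := R.le_opNorm _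
        _ ≤ C * (C ^ n * ‖ζ‖) := by
            rw [hRC]
            exact mul_le_mul_of_nonneg_left ihn hC
        _ = C ^ (n + 1) * ‖ζ‖ := by ring
  -- Step 4: the key bound on elementary tensors with first entry in P
  have hkey : ∀ ξ ∈ P, ∀ (η : Hπ) (n : ℕ),
      ‖(inner ℂ (tp ξ η) ((S ^ n) (tp ξ η)) : ℂ)‖ ≤ ‖η‖ ^ 2 * C ^ n := by
    intro ξ hξ η n
    set hr : G → ℝ := fun g => (inner ℂ ξ (ρ g ξ) : ℂ).re with hhr
    have hrim : ∀ g, (inner ℂ ξ (ρ g ξ) : ℂ) = ((hr g : ℝ) : ℂ) := by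
      intro g
      obtain ⟨h1, h2⟩ := Complex.nonneg_iff.1 (hPpos ξ hξ g)
      apply Complex.ext
      · simp [hhr]
      · simp [← h2]
    have hr0 : ∀ g, 0 ≤ hr g := fun g => (Complex.nonneg_iff.1 (hPpos ξ hξ g)).1
    have hr1 : ∀ g, hr g ≤ 1 := by
      intro g
      have hb : ‖(inner ℂ ξ (ρ g ξ) : ℂ)‖ ≤ 1 := by
        calc ‖(inner ℂ ξ (ρ g ξ) : ℂ)‖ ≤ ‖ξ‖ * ‖ρ g ξ‖ := norm_inner_le_norm _ _
          _ = 1 := by rw [rep_norm ρ hρu g ξ, hP1 ξ hξ, one_mul]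
      calc hr g ≤ ‖(inner ℂ ξ (ρ g ξ) : ℂ)‖ := Complex.re_le_norm _
        _ = ‖(inner ℂ ξ (ρ g ξ) : ℂ)‖ := rfl
        _ ≤ 1 := hb
    -- identification of the iterates of Qr hr as matrix coefficients of R^n
    have hid := rep_identity ρ hρu μ Tρ hTρ ξ
    have hRcoeff : ∀ m : ℕ, (Qr μ)^[m] hr = fun g => (inner ℂ ξ (ρ g ((R ^ m) ξ)) : ℂ).re := by
      intro m
      have hcoeff : (fun g => (((Qr μ)^[m] hr g : ℝ) : ℂ))
          = fun g => (inner ℂ ξ (ρ g ((R ^ m) ξ)) : ℂ) := by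
        rw [← Qc_ofReal_iter μ hr m]
        have he : (fun g => ((hr g : ℝ) : ℂ)) = fun g => (inner ℂ ξ (ρ g ξ) : ℂ) :=
          (funext hrim).symm
        rw [he, hRdef]
        exact (funext fun g => hid m g).symm
      funext g
      have hg := congrFun hcoeff g
      have := congrArg Complex.re hg
      simpa using this
    have hcont : ∀ m : ℕ, Continuous ((Qr μ)^[m] hr) := by
      intro m
      rw [hRcoeff m]
      exact Complex.continuous_re.comp (Continuous.inner continuous_const (hρc _))
    have hI : ∀ (m : ℕ) (g : G),
        Continuous fun s => ∫ t, (Qr μ)^[m] hr (g * s⁻¹ * t) ∂μ := by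
      intro m g
      set y : Hρ := (R ^ m) ξ with hydef
      have hp : ∀ s t : G,
          (inner ℂ ξ (ρ (g * s⁻¹ * t) y) : ℂ) = inner ℂ (ρ (s * g⁻¹) ξ) (ρ t y) := by
        intro s t
        have e3 : ρ (g * s⁻¹ * t) = ρ (g * s⁻¹) ∘L ρ t := by
          rw [map_mul ρ (g * s⁻¹) t]; rfl
        have e2 : ρ (g * s⁻¹) = ContinuousLinearMap.adjoint (ρ (s * g⁻¹)) := by
          rw [hρu, mul_inv_rev, inv_inv]
        rw [e3]
        show (inner ℂ ξ (ρ (g * s⁻¹) (ρ t y)) : ℂ) = _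
        rw [e2, ContinuousLinearMap.adjoint_inner_right]
      have hint : ∀ s : G, Integrable (fun t => (inner ℂ (ρ (s * g⁻¹) ξ) (ρ t y) : ℂ)) μ := by
        intro s
        refine (integrable_const (‖ξ‖ * ‖y‖)).mono'
          ((Continuous.inner continuous_const (hρc y)).aestronglyMeasurable)
          (ae_of_all _ fun t => ?_)
        calc ‖(inner ℂ (ρ (s * g⁻¹) ξ) (ρ t y) : ℂ)‖ ≤ ‖ρ (s * g⁻¹) ξ‖ * ‖ρ t y‖ :=
              norm_inner_le_norm _ _
          _ = ‖ξ‖ * ‖y‖ := by rw [rep_norm ρ hρu, rep_norm ρ hρu]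
      have heq : (fun s => ∫ t, (Qr μ)^[m] hr (g * s⁻¹ * t) ∂μ)
          = fun s => (inner ℂ (ρ s ((ρ g⁻¹) ξ)) (Tρ y) : ℂ).re := by
        funext s
        rw [hRcoeff m]
        calc (∫ t, (fun g => (inner ℂ ξ (ρ g ((R ^ m) ξ)) : ℂ).re) (g * s⁻¹ * t) ∂μ)
            = ∫ t, (inner ℂ (ρ (s * g⁻¹) ξ) (ρ t y) : ℂ).re ∂μ := by
              refine integral_congr_ae (ae_of_all _ fun t => ?_)
              dsimp only
              rw [← hydef, hp s t]
          _ = (∫ t, (inner ℂ (ρ (s * g⁻¹) ξ) (ρ t y) : ℂ) ∂μ).re := by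
              simpa using integral_re (hint s)
          _ = (inner ℂ (ρ (s * g⁻¹) ξ) (Tρ y) : ℂ).re := by rw [← hTρ]
          _ = (inner ℂ (ρ s ((ρ g⁻¹) ξ)) (Tρ y) : ℂ).re := by
              rw [map_mul ρ s g⁻¹]; rfl
      rw [heq]
      exact Complex.continuous_re.comp (Continuous.inner (hρc _) continuous_const)
    -- the dominating function  ‖η‖² • hr  and the dominated function f
    set hd : G → ℝ := fun g => ‖η‖ ^ 2 * hr g with hhd
    have hd0 : ∀ g, 0 ≤ hd g := fun g => mul_nonneg (by positivity) (hr0 g)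
    have hdM : ∀ g, hd g ≤ ‖η‖ ^ 2 := by
      intro g
      calc hd g ≤ ‖η‖ ^ 2 * 1 := mul_le_mul_of_nonneg_left (hr1 g) (by positivity)
        _ = ‖η‖ ^ 2 := mul_one _
    have hcontd : ∀ m : ℕ, Continuous ((Qr μ)^[m] hd) := by
      intro m
      rw [hhd, Qr_const_mul_iter μ (‖η‖ ^ 2) hr m]
      exact continuous_const.mul (hcont m)
    have hId : ∀ (m : ℕ) (g : G),
        Continuous fun s => ∫ t, (Qr μ)^[m] hd (g * s⁻¹ * t) ∂μ := by
      intro m g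
      have heq : (fun s => ∫ t, (Qr μ)^[m] hd (g * s⁻¹ * t) ∂μ)
          = fun s => ‖η‖ ^ 2 * ∫ t, (Qr μ)^[m] hr (g * s⁻¹ * t) ∂μ := by
        funext s
        rw [hhd, Qr_const_mul_iter μ (‖η‖ ^ 2) hr m]
        exact integral_const_mul _ _
      rw [heq]
      exact continuous_const.mul (hI m g)
    have hfh : ∀ g, ‖(inner ℂ (tp ξ η) (τ g (tp ξ η)) : ℂ)‖ ≤ hd g := by
      intro g
      have h1 : (inner ℂ (tp ξ η) (τ g (tp ξ η)) : ℂ)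
          = (inner ℂ ξ (ρ g ξ) : ℂ) * (inner ℂ η (π g η) : ℂ) := by
        rw [hτ, htp_inner]
      have h2 : ‖(inner ℂ ξ (ρ g ξ) : ℂ)‖ = hr g := by
        rw [hrim g, Complex.norm_real, Real.norm_eq_abs, abs_of_nonneg (hr0 g)]
      have h3 : ‖(inner ℂ η (π g η) : ℂ)‖ ≤ ‖η‖ ^ 2 := by
        calc ‖(inner ℂ η (π g η) : ℂ)‖ ≤ ‖η‖ * ‖π g η‖ := norm_inner_le_norm _ _
          _ = ‖η‖ ^ 2 := by rw [rep_norm π hπu]; ring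
      calc ‖(inner ℂ (tp ξ η) (τ g (tp ξ η)) : ℂ)‖
          = ‖(inner ℂ ξ (ρ g ξ) : ℂ)‖ * ‖(inner ℂ η (π g η) : ℂ)‖ := by
            rw [h1, norm_mul]
        _ ≤ hr g * ‖η‖ ^ 2 := by
            rw [h2]
            exact mul_le_mul_of_nonneg_left h3 (hr0 g)
        _ = hd g := by rw [hhd]; ring
    obtain ⟨_, _, hcomp⟩ := Qiter hcontd hd0 hdM hId
      (fun g => (inner ℂ (tp ξ η) (τ g (tp ξ η)) : ℂ)) hfh n
    -- identity for the tensor side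
    have hidτ := rep_identity τ hτu μ Tτ hTτ (tp ξ η) n 1
    rw [← hSdef] at hidτ
    simp only [map_one, ContinuousLinearMap.one_apply] at hidτ
    -- bound for the ρ side
    have hRre : (Qr μ)^[n] hr 1 ≤ C ^ n := by
      have hr1' : (Qr μ)^[n] hr 1 = (inner ℂ ξ (ρ 1 ((R ^ n) ξ)) : ℂ).re := by
        rw [hRcoeff n]
      rw [hr1']
      calc (inner ℂ ξ (ρ 1 ((R ^ n) ξ)) : ℂ).re
          ≤ ‖(inner ℂ ξ (ρ 1 ((R ^ n) ξ)) : ℂ)‖ := Complex.re_le_norm _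
        _ = ‖(inner ℂ ξ (ρ 1 ((R ^ n) ξ)) : ℂ)‖ := rfl
        _ ≤ ‖ξ‖ * ‖ρ 1 ((R ^ n) ξ)‖ := norm_inner_le_norm _ _
        _ = ‖(R ^ n) ξ‖ := by
            rw [rep_norm ρ hρu, hP1 ξ hξ, one_mul]
        _ ≤ C ^ n * ‖ξ‖ := hRnorm ξ n
        _ = C ^ n := by rw [hP1 ξ hξ, mul_one]
    have hdn : (Qr μ)^[n] hd 1 = ‖η‖ ^ 2 * (Qr μ)^[n] hr 1 := by
      rw [hhd, Qr_const_mul_iter μ (‖η‖ ^ 2) hr n]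
    calc ‖(inner ℂ (tp ξ η) ((S ^ n) (tp ξ η)) : ℂ)‖
        = ‖(Qc μ)^[n] (fun g => (inner ℂ (tp ξ η) (τ g (tp ξ η)) : ℂ)) 1‖ := by rw [hidτ]
      _ ≤ (Qr μ)^[n] hd 1 := hcomp 1
      _ = ‖η‖ ^ 2 * (Qr μ)^[n] hr 1 := hdn
      _ ≤ ‖η‖ ^ 2 * C ^ n := mul_le_mul_of_nonneg_left hRre (by positivity)
  -- Step 5: norm bound on iterates of S on elementary tensors, then on the span.
  have hgen : ∀ ξ ∈ P, ∀ (η : Hπ) (n : ℕ), ‖(S ^ n) (tp ξ η)‖ ≤ ‖η‖ * C ^ n := by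
    intro ξ hξ η n
    have hadj : ContinuousLinearMap.adjoint (S ^ n) = S ^ n := by
      rw [← ContinuousLinearMap.star_eq_adjoint]
      exact hSsa.pow n
    have hinner : (inner ℂ (tp ξ η) ((S ^ (n + n)) (tp ξ η)) : ℂ)
        = inner ℂ ((S ^ n) (tp ξ η)) ((S ^ n) (tp ξ η)) := by
      have h := ContinuousLinearMap.adjoint_inner_left (S ^ n) ((S ^ n) (tp ξ η)) (tp ξ η)
      rw [hadj] at h
      rw [pow_add, ContinuousLinearMap.mul_apply, ← h]
    have hsq : ‖(S ^ n) (tp ξ η)‖ ^ 2 = ‖(inner ℂ (tp ξ η) ((S ^ (n + n)) (tp ξ η)) : ℂ)‖ := by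
      rw [hinner, inner_self_eq_norm_sq_to_K]
      rw [norm_pow, RCLike.norm_ofReal, abs_of_nonneg (norm_nonneg _)]
    have hb := hkey ξ hξ η (n + n)
    rw [← hsq] at hb
    have hC2 : ‖η‖ ^ 2 * C ^ (n + n) = (‖η‖ * C ^ n) ^ 2 := by
      rw [pow_add]; ring
    rw [hC2] at hb
    nlinarith [norm_nonneg ((S ^ n) (tp ξ η)), mul_nonneg (norm_nonneg η) (pow_nonneg hC n)]
  have hspan : ∀ v ∈ Submodule.span ℂ Dset, ∃ K : ℝ, 0 ≤ K ∧ ∀ n : ℕ, ‖(S ^ n) v‖ ≤ K * C ^ n := by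
    intro v hv
    induction hv using Submodule.span_induction with
    | mem w hw =>
      simp only [hDdef, Set.mem_setOf_eq] at hw
      obtain ⟨ξ, hξ, η, rfl⟩ := hw
      exact ⟨‖η‖, norm_nonneg _, fun n => hgen ξ hξ η n⟩
    | zero => exact ⟨0, le_refl 0, fun n => by simp⟩
    | add x y hx hy ihx ihy =>
      obtain ⟨K1, hK1, h1⟩ := ihx
      obtain ⟨K2, hK2, h2⟩ := ihy
      refine ⟨K1 + K2, by linarith, fun n => ?_⟩
      calc ‖(S ^ n) (x + y)‖ = ‖(S ^ n) x + (S ^ n) y‖ := by rw [map_add]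
        _ ≤ ‖(S ^ n) x‖ + ‖(S ^ n) y‖ := norm_add_le _ _
        _ ≤ K1 * C ^ n + K2 * C ^ n := add_le_add (h1 n) (h2 n)
        _ = (K1 + K2) * C ^ n := by ring
    | smul a x hx ihx =>
      obtain ⟨K1, hK1, h1⟩ := ihx
      refine ⟨‖a‖ * K1, by positivity, fun n => ?_⟩
      calc ‖(S ^ n) (a • x)‖ = ‖a‖ * ‖(S ^ n) x‖ := by rw [_root_.map_smul, norm_smul]
        _ ≤ ‖a‖ * (K1 * C ^ n) := mul_le_mul_of_nonneg_left (h1 n) (norm_nonneg a)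
        _ = ‖a‖ * K1 * C ^ n := by ring
  -- Step 6: dyadic argument and closure
  have hSapply : ∀ v : Hτ, ‖S v‖ ≤ C * ‖v‖ := by
    have hsub : ((Submodule.span ℂ Dset : Submodule ℂ Hτ) : Set Hτ)
        ⊆ {v : Hτ | ‖S v‖ ≤ C * ‖v‖} := by
      intro v hv
      obtain ⟨K, hK0, hKb⟩ := hspan v hv
      exact opnorm_apply_le_of_dyadic S hSsa hC hK0 v hKb
    have hclosed : IsClosed {v : Hτ | ‖S v‖ ≤ C * ‖v‖} :=
      isClosed_le (continuous_norm.comp S.continuous) (continuous_const.mul continuous_norm)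
    intro v
    exact closure_minimal hsub hclosed (hDdense v)
  have hSnorm : ‖S‖ ≤ C := S.opNorm_le_bound hC hSapply
  have hfinal : ‖Tτ‖ * ‖Tτ‖ ≤ ‖Tρ‖ * ‖Tρ‖ := by
    rw [← ContinuousLinearMap.norm_adjoint_comp_self Tτ, ← hSdef, ← hCdef]
    exact hSnorm
  nlinarith [norm_nonneg Tτ, norm_nonneg Tρ]


-- check
end

section
/- Let (M, L²(M), J, P) be a standard form of a von Neumann algebra M. Then for any ξ, η ∈ L²(M), |⟨ξ,η⟩|² ≤ ⟨|ξ|,|η|⟩ · ⟨|Jξ|,|Jη|⟩, where |ζ| denotes the positive part in the polar decomposition ζ = u|ζ| with |ζ| ∈ P. -/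
open scoped ComplexOrder

/-- A standard form of a von Neumann algebra `M ⊆ B(H)`: a conjugate-linear isometric
involution `J` and a self-dual cone `P` such that `JMJ = M′`, `JcJ = c*` for central `c`,
`Jξ = ξ` for `ξ ∈ P`, and `xJxJ(P) ⊆ P` for `x ∈ M`; together with the polar decomposition
`ξ = u·|ξ|` (with `|ξ| ∈ P` and `u` a partial isometry in `M` with `u*ξ = |ξ|`). -/
structure StandardForm {H : Type*} [NormedAddCommGroup H] [InnerProductSpace ℂ H]
    [CompleteSpace H] (M : VonNeumannAlgebra H) where
  J : H ≃ₗᵢ⋆[ℂ] H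
  P : Set H
  J_involutive : ∀ ξ : H, J (J ξ) = ξ
  selfDual : ∀ ξ : H, ξ ∈ P ↔ ∀ η ∈ P, 0 ≤ (inner ℂ ξ η : ℂ)
  J_fix : ∀ ξ ∈ P, J ξ = ξ
  JMJ_commutant : ∀ x ∈ M, ∃ y ∈ M.commutant, ∀ ξ : H, J (x (J ξ)) = y ξ
  commutant_JMJ : ∀ y ∈ M.commutant, ∃ x ∈ M, ∀ ξ : H, J (x (J ξ)) = y ξ
  J_central : ∀ c ∈ M, c ∈ M.commutant →
    ∀ ξ : H, J (c (J ξ)) = (ContinuousLinearMap.adjoint c) ξ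
  cone_stable : ∀ x ∈ M, ∀ ξ ∈ P, x (J (x (J ξ))) ∈ P
  /-- `absV ξ = |ξ|`, the positive part in the polar decomposition of `ξ`. -/
  absV : H → H
  absV_mem : ∀ ξ : H, absV ξ ∈ P
  polar : ∀ ξ : H, ∃ u : H →L[ℂ] H, u ∈ M ∧ (∀ η, ‖u η‖ ≤ ‖η‖) ∧
    ξ = u (absV ξ) ∧ (ContinuousLinearMap.adjoint u) ξ = absV ξ

set_option linter.unusedSectionVars false

namespace StandardFormAux

variable {H : Type*} [NormedAddCommGroup H] [InnerProductSpace ℂ H] [CompleteSpace H]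
  {M : VonNeumannAlgebra H}

local notation "⟪" x ", " y "⟫" => (inner ℂ x y : ℂ)

/-- An antiunitary involution reverses inner products. -/
theorem inner_JJ (J : H ≃ₗᵢ⋆[ℂ] H) (x y : H) : ⟪J x, J y⟫ = ⟪y, x⟫ := by
  have hs1 : (J x) - Complex.I • (J y) = J (x + Complex.I • y) := by
    rw [map_add, map_smulₛₗ]
    simp [Complex.conj_I, sub_eq_add_neg]
  have hs2 : (J x) + Complex.I • (J y) = J (x - Complex.I • y) := by
    rw [map_sub, map_smulₛₗ]
    simp [Complex.conj_I, sub_eq_add_neg]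
  have e1 : ‖x + Complex.I • y‖ = ‖y - Complex.I • x‖ := by
    have h : y - Complex.I • x = (-Complex.I) • (x + Complex.I • y) := by
      rw [smul_add, smul_smul]
      simp [sub_eq_add_neg, add_comm]
    rw [h, norm_smul]; simp
  have e2 : ‖x - Complex.I • y‖ = ‖y + Complex.I • x‖ := by
    have h : y + Complex.I • x = Complex.I • (x - Complex.I • y) := by
      rw [smul_sub, smul_smul]
      simp [add_comm]
    rw [h, norm_smul]; simp
  rw [inner_eq_sum_norm_sq_div_four, inner_eq_sum_norm_sq_div_four]
  have hIK : (RCLike.I : ℂ) = Complex.I := rfl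
  rw [hIK, hs1, hs2, ← map_add, ← map_sub]
  simp only [LinearIsometryEquiv.norm_map]
  rw [e1, e2, add_comm x y, norm_sub_rev x y]

theorem inner_J_swap (sf : StandardForm M) (x y : H) : ⟪sf.J x, y⟫ = ⟪sf.J y, x⟫ := by
  conv_lhs => rw [← sf.J_involutive y]
  exact inner_JJ sf.J x (sf.J y)

theorem inner_nonneg (sf : StandardForm M) {ζ ρ : H} (hζ : ζ ∈ sf.P) (hρ : ρ ∈ sf.P) :
    0 ≤ ⟪ζ, ρ⟫ := (sf.selfDual ζ).mp hζ ρ hρ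

theorem inner_re_nonneg (sf : StandardForm M) {ζ ρ : H} (hζ : ζ ∈ sf.P) (hρ : ρ ∈ sf.P) :
    0 ≤ (⟪ζ, ρ⟫).re := by
  have := (Complex.le_def.mp (inner_nonneg sf hζ hρ)).1
  simpa using this

theorem adjoint_mem {a : H →L[ℂ] H} (ha : a ∈ M) : ContinuousLinearMap.adjoint a ∈ M := by
  rw [← ContinuousLinearMap.star_eq_adjoint]
  exact star_mem ha

theorem commute_apply {a y : H →L[ℂ] H} (ha : a ∈ M) (hy : y ∈ M.commutant) (w : H) :
    a (y w) = y (a w) := by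
  have h := VonNeumannAlgebra.mem_commutant_iff.mp hy a ha
  calc a (y w) = (a * y) w := rfl
    _ = (y * a) w := by rw [h]
    _ = y (a w) := rfl

/-- Elementary quadratic argument for the Cauchy-Schwarz step. -/
theorem aux_quad {N F G : ℝ} (hN : 0 ≤ N) (hF : 0 ≤ F) (hG : 0 ≤ G)
    (key : ∀ t : ℝ, 0 ≤ G - 2 * t * N + t ^ 2 * N * F) : N ≤ F * G := by
  rcases eq_or_lt_of_le hF with hF0 | hFpos
  · have hNz : N = 0 := by
      by_contra h0
      have hNpos : 0 < N := lt_of_le_of_ne hN (Ne.symm h0)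
      have h := key ((G + 1) / (2 * N))
      rw [← hF0] at h
      have h2 : 2 * ((G + 1) / (2 * N)) * N = G + 1 := by
        field_simp
      nlinarith
    rw [hNz]
    exact mul_nonneg hF hG
  · have h := key (1 / F)
    have hFne : F ≠ 0 := ne_of_gt hFpos
    have e : (1 / F) ^ 2 * N * F = (1 / F) * N := by
      field_simp
    rw [e] at h
    have h2 : (1 / F) * N ≤ G := by linarith
    calc N = F * ((1 / F) * N) := by field_simp
      _ ≤ F * G := mul_le_mul_of_nonneg_left h2 (le_of_lt hFpos)

/-- Uniqueness-type lemma: if `ζ, ζ₁` are in the cone, `a ∈ M`, `a ζ = ζ₁` and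
`a* ζ₁ = ζ`, then `ζ₁ = ζ`. -/
theorem eq_of_polar_rel (sf : StandardForm M) {a : H →L[ℂ] H} (ha : a ∈ M) {ζ ζ₁ : H}
    (hζ : ζ ∈ sf.P) (hζ₁ : ζ₁ ∈ sf.P) (h1 : a ζ = ζ₁)
    (h2 : ContinuousLinearMap.adjoint a ζ₁ = ζ) : ζ₁ = ζ := by
  have hJζ : sf.J ζ = ζ := sf.J_fix ζ hζ
  have hJζ₁ : sf.J ζ₁ = ζ₁ := sf.J_fix ζ₁ hζ₁
  have hnorm : ⟪ζ₁, ζ₁⟫ = ⟪ζ, ζ⟫ := by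
    calc ⟪ζ₁, ζ₁⟫ = ⟪a ζ, ζ₁⟫ := by rw [h1]
      _ = ⟪ζ, ContinuousLinearMap.adjoint a ζ₁⟫ :=
          (ContinuousLinearMap.adjoint_inner_right a ζ ζ₁).symm
      _ = ⟪ζ, ζ⟫ := by rw [h2]
  have hx : (1 : H →L[ℂ] H) - a ∈ M := sub_mem (one_mem M) ha
  have hmem := sf.cone_stable _ hx ζ hζ
  have e1 : ((1 : H →L[ℂ] H) - a) ζ = ζ - ζ₁ := by
    rw [ContinuousLinearMap.sub_apply, ContinuousLinearMap.one_apply, h1]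
  have hval : ((1 : H →L[ℂ] H) - a) (sf.J (((1 : H →L[ℂ] H) - a) (sf.J ζ)))
      = ζ - ζ₁ - (ζ₁ - a ζ₁) := by
    rw [hJζ, e1, map_sub, hJζ, hJζ₁, ContinuousLinearMap.sub_apply,
      ContinuousLinearMap.one_apply, map_sub, h1]
  rw [hval] at hmem
  have hpos : 0 ≤ ⟪ζ - ζ₁ - (ζ₁ - a ζ₁), ζ₁⟫ := inner_nonneg sf hmem hζ₁
  have haζ₁ : ⟪a ζ₁, ζ₁⟫ = ⟪ζ₁, ζ⟫ := by
    rw [← h2, ContinuousLinearMap.adjoint_inner_right]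
  have hexp : ⟪ζ - ζ₁ - (ζ₁ - a ζ₁), ζ₁⟫ = ⟪ζ, ζ₁⟫ - ⟪ζ₁, ζ₁⟫ - ⟪ζ₁, ζ₁⟫ + ⟪ζ₁, ζ⟫ := by
    rw [inner_sub_left, inner_sub_left, inner_sub_left, haζ₁]
    ring
  rw [hexp] at hpos
  have hre : 0 ≤ (⟪ζ, ζ₁⟫).re - (⟪ζ₁, ζ₁⟫).re - (⟪ζ₁, ζ₁⟫).re + (⟪ζ₁, ζ⟫).re := by
    have h := (Complex.le_def.mp hpos).1
    simpa [Complex.add_re, Complex.sub_re] using h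
  have hzero : ‖ζ - ζ₁‖ ^ 2 ≤ 0 := by
    rw [← inner_self_eq_norm_sq (𝕜 := ℂ) (ζ - ζ₁), inner_sub_sub_self]
    have hn : (⟪ζ₁, ζ₁⟫).re = (⟪ζ, ζ⟫).re := by rw [hnorm]
    simp only [map_add, map_sub, RCLike.re_to_complex]
    linarith
  have hsub : ζ - ζ₁ = 0 := by
    have h0 : ‖ζ - ζ₁‖ = 0 := le_antisymm (by nlinarith [norm_nonneg (ζ - ζ₁)]) (norm_nonneg _)
    simpa using h0
  exact (sub_eq_zero.mp hsub).symm

/-- The key identity: if `ξ = u|ξ|`, `u*ξ = |ξ|` with `u ∈ M`, then `u(Jξ) = |Jξ|`. -/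
theorem apply_J_eq_absV (sf : StandardForm M) (ξ : H) {u : H →L[ℂ] H} (hu : u ∈ M)
    (hu1 : ξ = u (sf.absV ξ)) (hu2 : ContinuousLinearMap.adjoint u ξ = sf.absV ξ) :
    u (sf.J ξ) = sf.absV (sf.J ξ) := by
  obtain ⟨p, hp, -, hp1, hp2⟩ := sf.polar (sf.J ξ)
  have hJabs : sf.J (sf.absV ξ) = sf.absV ξ := sf.J_fix _ (sf.absV_mem ξ)
  obtain ⟨u', hu', hu'eq⟩ := sf.JMJ_commutant u hu
  have hB : u' (sf.absV ξ) = sf.J ξ := by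
    have h := hu'eq (sf.absV ξ)
    rw [hJabs] at h
    rw [← h, ← hu1]
  have hA : ContinuousLinearMap.adjoint u (u (sf.absV ξ)) = sf.absV ξ := by
    rw [← hu1, hu2]
  have hC : ContinuousLinearMap.adjoint u (u (sf.J ξ)) = sf.J ξ := by
    rw [← hB, commute_apply hu hu' (sf.absV ξ),
      commute_apply (adjoint_mem hu) hu' (u (sf.absV ξ)), hA]
  have hαP : u (sf.J ξ) ∈ sf.P := by
    have h := sf.cone_stable u hu (sf.absV ξ) (sf.absV_mem ξ)
    rw [hJabs, ← hu1] at h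
    exact h
  have hup : u * p ∈ M := mul_mem hu hp
  have h1 : (u * p) (sf.absV (sf.J ξ)) = u (sf.J ξ) := by
    rw [ContinuousLinearMap.mul_apply, ← hp1]
  have h2 : ContinuousLinearMap.adjoint (u * p) (u (sf.J ξ)) = sf.absV (sf.J ξ) := by
    have hadj : ContinuousLinearMap.adjoint (u * p)
        = ContinuousLinearMap.adjoint p * ContinuousLinearMap.adjoint u := by
      rw [← ContinuousLinearMap.star_eq_adjoint, ← ContinuousLinearMap.star_eq_adjoint,
        ← ContinuousLinearMap.star_eq_adjoint, star_mul]
    rw [hadj, ContinuousLinearMap.mul_apply, hC, hp2]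
  exact eq_of_polar_rel sf hup (sf.absV_mem (sf.J ξ)) hαP h1 h2

end StandardFormAux

open StandardFormAux in
/-- In a standard form of a von Neumann algebra `M`, for any `ξ, η ∈ L²(M)` one
has `|⟨ξ,η⟩|² ≤ ⟨|ξ|,|η|⟩ · ⟨|Jξ|,|Jη|⟩`. -/
theorem abs_inner_sq_le_inner_abs_mul_inner_abs_J
    {H : Type*} [NormedAddCommGroup H] [InnerProductSpace ℂ H] [CompleteSpace H]
    (M : VonNeumannAlgebra H) (sf : StandardForm M) (ξ η : H) :
    ‖(inner ℂ ξ η : ℂ)‖ ^ 2 ≤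
      (inner ℂ (sf.absV ξ) (sf.absV η) : ℂ).re *
        (inner ℂ (sf.absV (sf.J ξ)) (sf.absV (sf.J η)) : ℂ).re := by
  obtain ⟨u, hu, -, hu1, hu2⟩ := sf.polar ξ
  obtain ⟨v, hv, -, hv1, hv2⟩ := sf.polar η
  set A := sf.absV ξ with hA
  set B := sf.absV η with hB
  set A' := sf.absV (sf.J ξ) with hA'
  set B' := sf.absV (sf.J η) with hB'
  have key1 : u (sf.J ξ) = A' := apply_J_eq_absV sf ξ hu hu1 hu2
  have key2 : v (sf.J η) = B' := apply_J_eq_absV sf η hv hv1 hv2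
  have hvadj : ContinuousLinearMap.adjoint v ∈ M := adjoint_mem hv
  set w : H →L[ℂ] H := ContinuousLinearMap.adjoint v * u with hwdef
  have hw : w ∈ M := mul_mem hvadj hu
  set z : ℂ := inner ℂ ξ η with hz
  have hJA : sf.J A = A := sf.J_fix _ (sf.absV_mem ξ)
  have hJB : sf.J B = B := sf.J_fix _ (sf.absV_mem η)
  have hJA' : sf.J A' = A' := sf.J_fix _ (sf.absV_mem (sf.J ξ))
  have hwA : w A = ContinuousLinearMap.adjoint v ξ := by
    rw [hwdef, ContinuousLinearMap.mul_apply, ← hu1]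
  have f1 : (inner ℂ (w A) B : ℂ) = z := by
    rw [hwA, ContinuousLinearMap.adjoint_inner_left, ← hv1]
  have f2 : (inner ℂ (sf.J (w A)) B : ℂ) = starRingEnd ℂ z := by
    rw [inner_J_swap sf (w A) B, hJB, ← f1, inner_conj_symm]
  obtain ⟨y', hy', hy'eq⟩ := sf.JMJ_commutant (ContinuousLinearMap.adjoint v) hvadj
  have c2 : sf.J (ContinuousLinearMap.adjoint v ξ) = y' (sf.J ξ) := by
    have h := hy'eq (sf.J ξ)
    rw [sf.J_involutive ξ] at h
    exact h
  have c4 : y' A' = sf.J (ContinuousLinearMap.adjoint v A') := by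
    have h := hy'eq A'
    rw [hJA'] at h
    exact h.symm
  have hvec : w (sf.J (w A)) =
      ContinuousLinearMap.adjoint v (sf.J (ContinuousLinearMap.adjoint v A')) := by
    rw [hwA, c2, hwdef, ContinuousLinearMap.mul_apply, commute_apply hu hy' (sf.J ξ),
      key1, c4]
  have f3 : (inner ℂ (w (sf.J (w A))) B : ℂ) = inner ℂ B' A' := by
    rw [hvec, ContinuousLinearMap.adjoint_inner_left, ← hv1, inner_J_swap sf _ η,
      ContinuousLinearMap.adjoint_inner_right, key2]
  have hFre : 0 ≤ (inner ℂ A B : ℂ).re := inner_re_nonneg sf (sf.absV_mem ξ) (sf.absV_mem η)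
  have hGre : 0 ≤ (inner ℂ B' A' : ℂ).re :=
    inner_re_nonneg sf (sf.absV_mem (sf.J η)) (sf.absV_mem (sf.J ξ))
  set N : ℝ := Complex.normSq z with hN
  set F : ℝ := (inner ℂ A B : ℂ).re with hF
  set G : ℝ := (inner ℂ B' A' : ℂ).re with hG
  clear_value z N F G
  have key : ∀ t : ℝ, 0 ≤ G - 2 * t * N + t ^ 2 * N * F := by
    intro t
    set lam : ℂ := -(t : ℂ) * starRingEnd ℂ z with hlam
    set c : H →L[ℂ] H := w + lam • 1 with hc
    have hsm : lam • (1 : H →L[ℂ] H) ∈ M := M.toStarSubalgebra.smul_mem (one_mem _) lam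
    have hcM : c ∈ M := add_mem hw hsm
    have hmem := sf.cone_stable c hcM A (sf.absV_mem ξ)
    have hcA : c A = w A + lam • A := by
      simp [hc, ContinuousLinearMap.add_apply, ContinuousLinearMap.smul_apply]
    have hJcA : sf.J (c A) = sf.J (w A) + starRingEnd ℂ lam • A := by
      rw [hcA, map_add, map_smulₛₗ, hJA]
    have hval : c (sf.J (c (sf.J A))) =
        w (sf.J (w A)) + starRingEnd ℂ lam • (w A) + lam • (sf.J (w A))
          + (starRingEnd ℂ lam * lam) • A := by
      rw [hJA, hJcA]
      simp only [hc, ContinuousLinearMap.add_apply, ContinuousLinearMap.smul_apply,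
        ContinuousLinearMap.one_apply, map_add, map_smul, smul_add, smul_smul]
      abel
    rw [hval] at hmem
    have hpos : (0 : ℂ) ≤ inner ℂ (w (sf.J (w A)) + starRingEnd ℂ lam • (w A)
        + lam • (sf.J (w A)) + (starRingEnd ℂ lam * lam) • A) B :=
      inner_nonneg sf hmem (sf.absV_mem η)
    rw [inner_add_left, inner_add_left, inner_add_left, inner_smul_left, inner_smul_left,
      inner_smul_left, f1, f2, f3] at hpos
    have hzc : z * starRingEnd ℂ z = ((N : ℝ) : ℂ) := by rw [Complex.mul_conj, ← hN]
    have e1 : starRingEnd ℂ (starRingEnd ℂ lam) * z = -(((t * N : ℝ)) : ℂ) := by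
      rw [Complex.conj_conj, hlam,
        show -(t : ℂ) * starRingEnd ℂ z * z = -((t : ℂ) * (z * starRingEnd ℂ z)) from by ring,
        hzc]
      push_cast
      ring
    have e2 : starRingEnd ℂ lam * starRingEnd ℂ z = -(((t * N : ℝ)) : ℂ) := by
      rw [hlam, map_mul, map_neg, Complex.conj_ofReal, Complex.conj_conj,
        show -(t : ℂ) * z * starRingEnd ℂ z = -((t : ℂ) * (z * starRingEnd ℂ z)) from by ring,
        hzc]
      push_cast
      ring
    have e3 : starRingEnd ℂ (starRingEnd ℂ lam * lam) = ((t ^ 2 * N : ℝ) : ℂ) := by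
      rw [map_mul, Complex.conj_conj, hlam, map_mul, map_neg, Complex.conj_ofReal,
        Complex.conj_conj,
        show -(t : ℂ) * starRingEnd ℂ z * (-(t : ℂ) * z)
          = ((t : ℂ) * (t : ℂ)) * (z * starRingEnd ℂ z) from by ring,
        hzc]
      push_cast
      ring
    rw [e1, e2, e3] at hpos
    have hre : 0 ≤ (inner ℂ B' A' : ℂ).re - t * N - t * N + (t ^ 2 * N) * (inner ℂ A B : ℂ).re := by
      have h := (Complex.le_def.mp hpos).1
      simp only [Complex.add_re, Complex.neg_re, Complex.ofReal_re, Complex.re_ofReal_mul,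
        Complex.zero_re] at h
      linarith
    rw [← hG, ← hF] at hre
    nlinarith [hre]
  have hGsym : (inner ℂ A' B' : ℂ).re = G := by
    rw [hG, ← inner_conj_symm (𝕜 := ℂ) A' B', Complex.conj_re]
  rw [hGsym, Complex.sq_norm, ← hN]
  exact aux_quad (hN ▸ Complex.normSq_nonneg z) hFre hGre key
end

section
/- Let B be a finite factor with tracial state τ, let G = U(B) be its unitary group (discrete), acting on A = B(L²(B)) by α_U = Ad U, with π_A^α and π_B^α the canonical implementing representations. If for every finite subset {U₁,…,U_n} of U(B) one has ‖Σᵢ Uᵢ ⊗ Ūᵢ‖ = n, then there exists a hypertrace for B, i.e., a state ψ on B(L²(B)) invariant under Ad U for all U ∈ U(B). -/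
open scoped ComplexOrder

open scoped InnerProductSpace Topology
set_option linter.unusedSectionVars false
set_option maxHeartbeats 1000000
open scoped ComplexOrder InnerProductSpace Topology
set_option linter.unusedSectionVars false

section auxpsd
open scoped MatrixOrder Matrix
theorem posSemidef_eq_conjTranspose_mul_self_aux (m : ℕ) (M : Matrix (Fin m) (Fin m) ℂ)
    (hpsd : M.PosSemidef) : ∃ C : Matrix (Fin m) (Fin m) ℂ, M = Cᴴ * C := by
  obtain ⟨X, hX, -, hXM⟩ := CFC.exists_sqrt_of_isSelfAdjoint_of_quasispectrumRestricts
    hpsd.isHermitian (QuasispectrumRestricts.nnreal_of_nonneg hpsd.nonneg)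
  exact ⟨X, by rw [← Matrix.star_eq_conjTranspose, hX.star_eq]; exact hXM.symm⟩
end auxpsd

section aux
variable {H : Type*} [NormedAddCommGroup H] [InnerProductSpace ℂ H]
  {Hτ : Type*} [NormedAddCommGroup Hτ] [InnerProductSpace ℂ Hτ]
  (tp : H → H → Hτ)
  (htp_inner : ∀ ξ ξ' η η' : H,
    (inner ℂ (tp ξ η) (tp ξ' η') : ℂ) = (inner ℂ ξ ξ' : ℂ) * (inner ℂ η' η : ℂ))

theorem inner_self_coe {E : Type*} [NormedAddCommGroup E] [InnerProductSpace ℂ E] (v : E) :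
    (inner ℂ v v : ℂ) = ((‖v‖^2 : ℝ) : ℂ) := by
  rw [inner_self_eq_norm_sq_to_K]; norm_cast

include htp_inner

theorem tp_smul_left (c : ℂ) (x y : H) : tp (c • x) y = c • tp x y := by
  have h : (inner ℂ (tp (c • x) y - c • tp x y) (tp (c • x) y - c • tp x y) : ℂ) = 0 := by
    simp only [inner_sub_left, inner_sub_right, inner_smul_left, inner_smul_right, htp_inner,
      inner_smul_left, inner_smul_right]
    ring
  simpa [sub_eq_zero] using inner_self_eq_zero.mp h

theorem tp_add_left (x x' y : H) : tp (x + x') y = tp x y + tp x' y := by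
  have h : (inner ℂ (tp (x + x') y - (tp x y + tp x' y)) (tp (x + x') y - (tp x y + tp x' y)) : ℂ) = 0 := by
    simp only [inner_sub_left, inner_sub_right, inner_add_left, inner_add_right, htp_inner]
    ring
  simpa [sub_eq_zero] using inner_self_eq_zero.mp h


theorem inner_sum_tp {m m' : ℕ} (x y : Fin m → H) (x' y' : Fin m' → H) :
    (inner ℂ (∑ j, tp (x j) (y j)) (∑ j, tp (x' j) (y' j)) : ℂ)
      = ∑ j, ∑ k, (inner ℂ (x j) (x' k) : ℂ) * (inner ℂ (y' k) (y j) : ℂ) := by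
  rw [sum_inner]
  refine Finset.sum_congr rfl fun j _ => ?_
  rw [inner_sum]
  exact Finset.sum_congr rfl fun k _ => htp_inner _ _ _ _

theorem gram_bound (m : ℕ) (x y : Fin m → H) (a : H →L[ℂ] H) :
    ‖∑ j, tp (a (x j)) (y j)‖ ≤ ‖a‖ * ‖∑ j, tp (x j) (y j)‖ := by
  classical
  set M : Matrix (Fin m) (Fin m) ℂ := Matrix.of fun j k => (inner ℂ (y j) (y k) : ℂ) with hM
  have hpsd : M.PosSemidef := by
    refine Matrix.posSemidef_iff_dotProduct_mulVec.mpr ⟨?_, ?_⟩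
    · ext j k
      simp [hM, Matrix.conjTranspose_apply, inner_conj_symm]
    · intro v
      have h : (inner ℂ (∑ j, v j • y j) (∑ j, v j • y j) : ℂ)
          = dotProduct (star v) (M.mulVec v) := by
        rw [sum_inner]
        refine Finset.sum_congr rfl fun j _ => ?_
        rw [inner_smul_left, inner_sum, Finset.mul_sum]
        simp only [Matrix.mulVec, dotProduct, hM, Matrix.of_apply, Pi.star_apply,
          RCLike.star_def, inner_smul_right, Finset.mul_sum]
        refine Finset.sum_congr rfl fun k _ => ?_
        ring
      rw [← h, inner_self_coe]
      have : (0:ℝ) ≤ ‖∑ j, v j • y j‖^2 := by positivity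
      exact_mod_cast this
  obtain ⟨C, hC⟩ := posSemidef_eq_conjTranspose_mul_self_aux m M hpsd
  have hyk : ∀ j k, (inner ℂ (y k) (y j) : ℂ) = ∑ m', (starRingEnd ℂ) (C m' k) * C m' j := by
    intro j k
    have := congrFun (congrFun hC k) j
    simpa [hM, Matrix.mul_apply, Matrix.conjTranspose_apply] using this
  have key : ∀ z : Fin m → H,
      ((‖∑ j, tp (z j) (y j)‖ ^ 2 : ℝ) : ℂ)
        = ∑ m', ((‖∑ j, (starRingEnd ℂ) (C m' j) • z j‖ ^ 2 : ℝ) : ℂ) := by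
    intro z
    rw [← inner_self_coe, inner_sum_tp tp htp_inner]
    have h2 : ∀ m' : Fin m, ((‖∑ j, (starRingEnd ℂ) (C m' j) • z j‖ ^ 2 : ℝ) : ℂ)
        = ∑ j, ∑ k, C m' j * (starRingEnd ℂ) (C m' k) * (inner ℂ (z j) (z k) : ℂ) := by
      intro m'
      rw [← inner_self_coe, sum_inner]
      refine Finset.sum_congr rfl fun j _ => ?_
      rw [inner_sum]
      refine Finset.sum_congr rfl fun k _ => ?_
      rw [inner_smul_left, inner_smul_right]
      simp only [RingHomCompTriple.comp_apply, RingHom.id_apply, starRingEnd_self_apply]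
      ring
    simp_rw [h2]
    calc ∑ j, ∑ k, (inner ℂ (z j) (z k) : ℂ) * (inner ℂ (y k) (y j) : ℂ)
        = ∑ j, ∑ k, ∑ m', C m' j * (starRingEnd ℂ) (C m' k) * (inner ℂ (z j) (z k) : ℂ) := by
          refine Finset.sum_congr rfl fun j _ => Finset.sum_congr rfl fun k _ => ?_
          rw [hyk j k, Finset.mul_sum]
          exact Finset.sum_congr rfl fun m' _ => by ring
      _ = ∑ j, ∑ m', ∑ k, C m' j * (starRingEnd ℂ) (C m' k) * (inner ℂ (z j) (z k) : ℂ) := by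
          exact Finset.sum_congr rfl fun j _ => Finset.sum_comm ..
      _ = ∑ m', ∑ j, ∑ k, C m' j * (starRingEnd ℂ) (C m' k) * (inner ℂ (z j) (z k) : ℂ) :=
          Finset.sum_comm ..
  have keyx : ‖∑ j, tp (x j) (y j)‖ ^ 2
      = ∑ m', ‖∑ j, (starRingEnd ℂ) (C m' j) • x j‖ ^ 2 := by
    have := key x
    push_cast at this
    exact_mod_cast this
  have keyax : ‖∑ j, tp (a (x j)) (y j)‖ ^ 2
      = ∑ m', ‖a (∑ j, (starRingEnd ℂ) (C m' j) • x j)‖ ^ 2 := by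
    have h := key fun j => a (x j)
    have hu : ∀ m' : Fin m, (∑ j, (starRingEnd ℂ) (C m' j) • (a (x j)))
        = a (∑ j, (starRingEnd ℂ) (C m' j) • x j) := by
      intro m'; rw [map_sum]; simp only [map_smul]
    simp_rw [hu] at h
    exact_mod_cast h
  have hle : ‖∑ j, tp (a (x j)) (y j)‖ ^ 2 ≤ (‖a‖ * ‖∑ j, tp (x j) (y j)‖) ^ 2 := by
    rw [keyax]
    calc (∑ m', ‖a (∑ j, (starRingEnd ℂ) (C m' j) • x j)‖ ^ 2)
        ≤ ∑ m', ‖a‖ ^ 2 * ‖∑ j, (starRingEnd ℂ) (C m' j) • x j‖ ^ 2 := by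
          refine Finset.sum_le_sum fun m' _ => ?_
          have h1 := a.le_opNorm (∑ j, (starRingEnd ℂ) (C m' j) • x j)
          nlinarith [norm_nonneg (a (∑ j, (starRingEnd ℂ) (C m' j) • x j)),
            norm_nonneg (∑ j, (starRingEnd ℂ) (C m' j) • x j), norm_nonneg a]
      _ = ‖a‖ ^ 2 * ∑ m', ‖∑ j, (starRingEnd ℂ) (C m' j) • x j‖ ^ 2 := by
          rw [Finset.mul_sum]
      _ = (‖a‖ * ‖∑ j, tp (x j) (y j)‖) ^ 2 := by rw [← keyx]; ring
  have h0 : (0:ℝ) ≤ ‖a‖ * ‖∑ j, tp (x j) (y j)‖ := by positivity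
  nlinarith [norm_nonneg (∑ j, tp (a (x j)) (y j))]

end aux


section aux2
variable {H : Type*} [NormedAddCommGroup H] [InnerProductSpace ℂ H] [CompleteSpace H]
  {Hτ : Type*} [NormedAddCommGroup Hτ] [InnerProductSpace ℂ Hτ]

/-- finite data representing a vector in the span of elementary tensors -/
def TData (H : Type*) := Σ m : ℕ, (Fin m → H) × (Fin m → H)

variable (tp : H → H → Hτ)

/-- the vector represented by the data -/
def vecOf (d : TData H) : Hτ := ∑ j, tp (d.2.1 j) (d.2.2 j)

/-- `(a ⊗ 1)` applied to the vector -/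
def tvecOf (a : H →L[ℂ] H) (d : TData H) : Hτ := ∑ j, tp (a (d.2.1 j)) (d.2.2 j)

/-- the vector state at `vecOf d` -/
noncomputable def psiOf (d : TData H) (a : H →L[ℂ] H) : ℂ :=
  inner ℂ (vecOf tp d) (tvecOf tp a d)

variable (htp_inner : ∀ ξ ξ' η η' : H,
    (inner ℂ (tp ξ η) (tp ξ' η') : ℂ) = (inner ℂ ξ ξ' : ℂ) * (inner ℂ η' η : ℂ))

include htp_inner

theorem psiOf_eq_sum (d : TData H) (a : H →L[ℂ] H) :
    psiOf tp d a = ∑ j, ∑ k,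
      (inner ℂ (d.2.1 j) (a (d.2.1 k)) : ℂ) * (inner ℂ (d.2.2 k) (d.2.2 j) : ℂ) :=
  inner_sum_tp tp htp_inner d.2.1 d.2.2 (fun k => a (d.2.1 k)) d.2.2

theorem psiOf_add (d : TData H) (a b : H →L[ℂ] H) :
    psiOf tp d (a + b) = psiOf tp d a + psiOf tp d b := by
  have h : tvecOf tp (a + b) d = tvecOf tp a d + tvecOf tp b d := by
    rw [tvecOf, tvecOf, tvecOf, ← Finset.sum_add_distrib]
    refine Finset.sum_congr rfl fun j _ => ?_
    rw [ContinuousLinearMap.add_apply, tp_add_left tp htp_inner _ _ _]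
  rw [psiOf, h, inner_add_right]; rfl

theorem psiOf_smul (d : TData H) (c : ℂ) (a : H →L[ℂ] H) :
    psiOf tp d (c • a) = c * psiOf tp d a := by
  have h : tvecOf tp (c • a) d = c • tvecOf tp a d := by
    rw [tvecOf, tvecOf, Finset.smul_sum]
    refine Finset.sum_congr rfl fun j _ => ?_
    rw [ContinuousLinearMap.smul_apply, tp_smul_left tp htp_inner _ _ _]
  rw [psiOf, h, inner_smul_right]; rfl

theorem psiOf_one (d : TData H) : psiOf tp d 1 = ((‖vecOf tp d‖ ^ 2 : ℝ) : ℂ) := by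
  have h : tvecOf tp 1 d = vecOf tp d := by
    rw [tvecOf, vecOf]
    exact Finset.sum_congr rfl fun j _ => by rw [ContinuousLinearMap.one_apply]
  rw [psiOf, h, inner_self_coe]

theorem psiOf_star_mul_self (d : TData H) (a : H →L[ℂ] H) :
    psiOf tp d (star a * a) = ((‖tvecOf tp a d‖ ^ 2 : ℝ) : ℂ) := by
  rw [psiOf, ← inner_self_coe]
  rw [vecOf, tvecOf, tvecOf]
  rw [inner_sum_tp tp htp_inner, inner_sum_tp tp htp_inner]
  refine Finset.sum_congr rfl fun j _ => Finset.sum_congr rfl fun k _ => ?_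
  congr 1
  rw [ContinuousLinearMap.mul_apply, ContinuousLinearMap.star_eq_adjoint,
    ContinuousLinearMap.adjoint_inner_right]

theorem psiOf_norm_le (d : TData H) (a : H →L[ℂ] H) :
    ‖psiOf tp d a‖ ≤ ‖a‖ * ‖vecOf tp d‖ ^ 2 := by
  calc ‖psiOf tp d a‖ ≤ ‖vecOf tp d‖ * ‖tvecOf tp a d‖ := norm_inner_le_norm _ _
    _ ≤ ‖vecOf tp d‖ * (‖a‖ * ‖vecOf tp d‖) := by
        refine mul_le_mul_of_nonneg_left ?_ (norm_nonneg _)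
        exact gram_bound tp htp_inner d.1 d.2.1 d.2.2 a
    _ = ‖a‖ * ‖vecOf tp d‖ ^ 2 := by ring

theorem inner_vec_tvec_swap (d e : TData H) (a : H →L[ℂ] H) :
    (inner ℂ (vecOf tp d) (tvecOf tp a e) : ℂ)
      = (inner ℂ (tvecOf tp (star a) d) (vecOf tp e) : ℂ) := by
  rw [vecOf, vecOf, tvecOf, tvecOf,
    inner_sum_tp tp htp_inner, inner_sum_tp tp htp_inner]
  refine Finset.sum_congr rfl fun j _ => Finset.sum_congr rfl fun k _ => ?_
  congr 1
  rw [ContinuousLinearMap.star_eq_adjoint, ContinuousLinearMap.adjoint_inner_left]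

theorem psiOf_diff_le (d e : TData H) (a : H →L[ℂ] H) :
    ‖psiOf tp e a - psiOf tp d a‖
      ≤ ‖a‖ * (‖vecOf tp e‖ + ‖vecOf tp d‖) * ‖vecOf tp e - vecOf tp d‖ := by
  have hsplit : psiOf tp e a - psiOf tp d a
      = (inner ℂ (vecOf tp e - vecOf tp d) (tvecOf tp a e) : ℂ)
        + (inner ℂ (tvecOf tp (star a) d) (vecOf tp e - vecOf tp d) : ℂ) := by
    rw [inner_sub_left, inner_sub_right, psiOf, psiOf,
      inner_vec_tvec_swap tp htp_inner d e a,
      inner_vec_tvec_swap tp htp_inner d d a]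
    ring
  rw [hsplit]
  calc ‖(inner ℂ (vecOf tp e - vecOf tp d) (tvecOf tp a e) : ℂ)
        + (inner ℂ (tvecOf tp (star a) d) (vecOf tp e - vecOf tp d) : ℂ)‖
      ≤ ‖(inner ℂ (vecOf tp e - vecOf tp d) (tvecOf tp a e) : ℂ)‖
        + ‖(inner ℂ (tvecOf tp (star a) d) (vecOf tp e - vecOf tp d) : ℂ)‖ := norm_add_le _ _
    _ ≤ ‖vecOf tp e - vecOf tp d‖ * ‖tvecOf tp a e‖
        + ‖tvecOf tp (star a) d‖ * ‖vecOf tp e - vecOf tp d‖ := by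
        gcongr <;> exact norm_inner_le_norm _ _
    _ ≤ ‖vecOf tp e - vecOf tp d‖ * (‖a‖ * ‖vecOf tp e‖)
        + ‖a‖ * ‖vecOf tp d‖ * ‖vecOf tp e - vecOf tp d‖ := by
        gcongr
        · exact gram_bound tp htp_inner e.1 e.2.1 e.2.2 a
        · calc ‖tvecOf tp (star a) d‖ ≤ ‖star a‖ * ‖vecOf tp d‖ :=
                gram_bound tp htp_inner d.1 d.2.1 d.2.2 (star a)
            _ = ‖a‖ * ‖vecOf tp d‖ := by rw [norm_star]
    _ = ‖a‖ * (‖vecOf tp e‖ + ‖vecOf tp d‖) * ‖vecOf tp e - vecOf tp d‖ := by ring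

end aux2
section aux3
variable {H : Type*} [NormedAddCommGroup H] [InnerProductSpace ℂ H] [CompleteSpace H]
  {Hτ : Type*} [NormedAddCommGroup Hτ] [InnerProductSpace ℂ Hτ]
  (tp : H → H → Hτ)
  (htp_inner : ∀ ξ ξ' η η' : H,
    (inner ℂ (tp ξ η) (tp ξ' η') : ℂ) = (inner ℂ ξ ξ' : ℂ) * (inner ℂ η' η : ℂ))

/-- data transformed by applying `V` to both legs -/
def conjData (V : H →L[ℂ] H) (d : TData H) : TData H :=
  ⟨d.1, (fun j => V (d.2.1 j), fun j => V (d.2.2 j))⟩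

theorem unitary_inner_eq {U : H →L[ℂ] H} (hU : U ∈ unitary (H →L[ℂ] H)) (u v : H) :
    (inner ℂ (U u) (U v) : ℂ) = (inner ℂ u v : ℂ) := by
  have h1 : (inner ℂ (U u) (U v) : ℂ) = (inner ℂ ((ContinuousLinearMap.adjoint U) (U u)) v : ℂ) :=
    (ContinuousLinearMap.adjoint_inner_left U v (U u)).symm
  rw [h1, ← ContinuousLinearMap.star_eq_adjoint, ← ContinuousLinearMap.mul_apply,
    (Unitary.mem_iff.mp hU).1, ContinuousLinearMap.one_apply]

include htp_inner

theorem psiOf_conj {U : H →L[ℂ] H} (hU : U ∈ unitary (H →L[ℂ] H))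
    (d : TData H) (a : H →L[ℂ] H) :
    psiOf tp d (U * a * star U) = psiOf tp (conjData (star U) d) a := by
  rw [psiOf_eq_sum tp htp_inner, psiOf_eq_sum tp htp_inner]
  refine Finset.sum_congr rfl fun j _ => Finset.sum_congr rfl fun k _ => ?_
  have hstar : (star U) ∈ unitary (H →L[ℂ] H) := Unitary.star_mem hU
  congr 1
  · show (inner ℂ (d.2.1 j) ((U * a * star U) (d.2.1 k)) : ℂ)
      = (inner ℂ ((star U) (d.2.1 j)) (a ((star U) (d.2.1 k))) : ℂ)
    rw [ContinuousLinearMap.star_eq_adjoint, ContinuousLinearMap.adjoint_inner_left]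
    rfl
  · show (inner ℂ (d.2.2 k) (d.2.2 j) : ℂ)
      = (inner ℂ ((star U) (d.2.2 k)) ((star U) (d.2.2 j)) : ℂ)
    rw [unitary_inner_eq (Unitary.star_mem hU)]

omit htp_inner in
theorem vecOf_conjData (W : (H →L[ℂ] H) → (Hτ →L[ℂ] Hτ)) {V : H →L[ℂ] H}
    (hWV : ∀ ξ η : H, W V (tp ξ η) = tp (V ξ) (V η)) (d : TData H) :
    vecOf tp (conjData V d) = W V (vecOf tp d) := by
  rw [vecOf, vecOf, map_sum]
  exact Finset.sum_congr rfl fun j _ => (hWV _ _).symm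

/-- representation of span elements -/
theorem span_rep {ζ : Hτ}
    (hζ : ζ ∈ Submodule.span ℂ (Set.range fun v : H × H => tp v.1 v.2)) :
    ∃ d : TData H, vecOf tp d = ζ := by
  obtain ⟨n, f, g, hsum⟩ := Submodule.mem_span_set'.mp hζ
  have hrep : ∀ i : Fin n, ∃ p : H × H, tp p.1 p.2 = (g i : Hτ) := fun i => (g i).2
  choose p hp using hrep
  refine ⟨⟨n, (fun i => f i • (p i).1, fun i => (p i).2)⟩, ?_⟩
  show (∑ j : Fin n, tp (f j • (p j).1) ((p j).2)) = ζ
  rw [← hsum]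
  refine Finset.sum_congr rfl fun i _ => ?_
  show tp (f i • (p i).1) ((p i).2) = f i • (g i : Hτ)
  rw [tp_smul_left tp htp_inner, hp]

/-- norm of vecOf after applying a unitary to both legs -/
theorem norm_vec_conj {U : H →L[ℂ] H} (hU : U ∈ unitary (H →L[ℂ] H)) (d : TData H) :
    ‖vecOf tp (conjData U d)‖ = ‖vecOf tp d‖ := by
  have h : ((‖vecOf tp (conjData U d)‖^2 : ℝ) : ℂ) = ((‖vecOf tp d‖^2 : ℝ) : ℂ) := by
    rw [← inner_self_coe, ← inner_self_coe, vecOf, vecOf,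
      inner_sum_tp tp htp_inner, inner_sum_tp tp htp_inner]
    refine Finset.sum_congr rfl fun j _ => Finset.sum_congr rfl fun k _ => ?_
    show (inner ℂ (U _) (U _) : ℂ) * (inner ℂ (U _) (U _) : ℂ) = _
    rw [unitary_inner_eq hU, unitary_inner_eq hU]
  have h2 : ‖vecOf tp (conjData U d)‖^2 = ‖vecOf tp d‖^2 := by exact_mod_cast h
  nlinarith [norm_nonneg (vecOf tp (conjData U d)), norm_nonneg (vecOf tp d)]

variable (htp_dense : Dense
    ((Submodule.span ℂ (Set.range fun v : H × H => tp v.1 v.2) : Submodule ℂ Hτ) : Set Hτ))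

include htp_dense

/-- W U is isometric -/
theorem W_isometry (W : (H →L[ℂ] H) → (Hτ →L[ℂ] Hτ)) {U : H →L[ℂ] H}
    (hU : U ∈ unitary (H →L[ℂ] H))
    (hWU : ∀ ξ η : H, W U (tp ξ η) = tp (U ξ) (U η)) (ζ : Hτ) :
    ‖W U ζ‖ = ‖ζ‖ := by
  have heq : Set.EqOn (fun ζ => ‖W U ζ‖) (fun ζ => ‖ζ‖)
      ((Submodule.span ℂ (Set.range fun v : H × H => tp v.1 v.2) : Submodule ℂ Hτ) : Set Hτ) := by
    intro ζ hζ
    obtain ⟨d, rfl⟩ := span_rep tp htp_inner hζ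
    show ‖W U (vecOf tp d)‖ = ‖vecOf tp d‖
    rw [← vecOf_conjData tp W hWU d]
    exact norm_vec_conj tp htp_inner hU d
  have hcl := heq.closure (by continuity) (by continuity)
  rw [htp_dense.closure_eq] at hcl
  exact hcl (Set.mem_univ ζ)

/-- W 1 is the identity -/
theorem W_one (W : (H →L[ℂ] H) → (Hτ →L[ℂ] Hτ))
    (hW1 : ∀ ξ η : H, W 1 (tp ξ η) = tp ((1 : H →L[ℂ] H) ξ) ((1 : H →L[ℂ] H) η)) (ζ : Hτ) :
    W 1 ζ = ζ := by
  have heq : Set.EqOn (fun ζ => W 1 ζ) (fun ζ => ζ)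
      ((Submodule.span ℂ (Set.range fun v : H × H => tp v.1 v.2) : Submodule ℂ Hτ) : Set Hτ) := by
    intro ζ hζ
    obtain ⟨d, rfl⟩ := span_rep tp htp_inner hζ
    show W 1 (vecOf tp d) = vecOf tp d
    rw [vecOf, map_sum]
    refine Finset.sum_congr rfl fun j _ => ?_
    rw [hW1]
    simp
  have hcl := heq.closure (by continuity) (by continuity)
  rw [htp_dense.closure_eq] at hcl
  exact hcl (Set.mem_univ ζ)

end aux3
section aux4
variable {Hτ : Type*} [NormedAddCommGroup Hτ] [InnerProductSpace ℂ Hτ]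

theorem almost_inv_abstract (n : ℕ) (T : Fin n → (Hτ →L[ℂ] Hτ))
    (hiso : ∀ i ζ, ‖T i ζ‖ = ‖ζ‖) (i0 : Fin n) (hT0 : ∀ ζ, T i0 ζ = ζ)
    (hn : ‖∑ i, T i‖ = (n : ℝ)) (ε : ℝ) (hε : 0 < ε) (hε1 : ε ≤ 1) :
    ∃ ξ : Hτ, ‖ξ‖ = 1 ∧ ∀ i, ‖T i ξ - ξ‖ ≤ ε := by
  classical
  have hn1 : (1 : ℝ) ≤ n := by exact_mod_cast i0.pos
  set δ : ℝ := ε^2 / (8 * n) with hδ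
  have hδpos : 0 < δ := by positivity
  have hδsmall : δ ≤ 1 / 8 := by
    rw [hδ, div_le_div_iff₀ (by positivity) (by norm_num)]
    nlinarith
  have hlt : (n : ℝ) - δ < ‖∑ i, T i‖ := by rw [hn]; linarith
  obtain ⟨ξ0, hξ0a, hξ0b⟩ := ContinuousLinearMap.exists_lt_apply_of_lt_opNorm (∑ i, T i) hlt
  have hξ0ne : ξ0 ≠ 0 := by
    rintro rfl
    rw [map_zero, norm_zero] at hξ0b
    linarith
  set ξ : Hτ := ((‖ξ0‖⁻¹ : ℝ) : ℂ) • ξ0 with hξdef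
  have hnξ0 : 0 < ‖ξ0‖ := norm_pos_iff.mpr hξ0ne
  have hninv : ‖((‖ξ0‖⁻¹ : ℝ) : ℂ)‖ = ‖ξ0‖⁻¹ := by
    rw [Complex.norm_real, norm_inv, norm_norm]
  have hξ1 : ‖ξ‖ = 1 := by
    rw [hξdef, norm_smul, hninv, inv_mul_cancel₀ (ne_of_gt hnξ0)]
  have hSξ : (n : ℝ) - δ < ‖(∑ i, T i) ξ‖ := by
    rw [hξdef, map_smul, norm_smul, hninv]
    have hinv1 : (1:ℝ) ≤ ‖ξ0‖⁻¹ := by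
      rw [le_inv_comm₀ one_pos hnξ0]
      simpa using hξ0a.le
    have hnn : (0:ℝ) ≤ (n : ℝ) - δ := by linarith
    calc (n : ℝ) - δ < ‖(∑ i, T i) ξ0‖ := hξ0b
      _ = 1 * ‖(∑ i, T i) ξ0‖ := (one_mul _).symm
      _ ≤ ‖ξ0‖⁻¹ * ‖(∑ i, T i) ξ0‖ := by
          exact mul_le_mul_of_nonneg_right hinv1 (norm_nonneg _)
  have hTξ : ∀ i, ‖T i ξ‖ = 1 := fun i => by rw [hiso i ξ, hξ1]
  set f : Fin n × Fin n → ℝ := fun p => RCLike.re (inner ℂ (T p.1 ξ) (T p.2 ξ) : ℂ) with hf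
  have h1 : ‖(∑ i, T i) ξ‖ ^ 2 = ∑ p : Fin n × Fin n, f p := by
    rw [← inner_self_eq_norm_sq (𝕜 := ℂ), ContinuousLinearMap.sum_apply,
      ← Finset.univ_product_univ, Finset.sum_product]
    rw [sum_inner]
    simp only [inner_sum, map_sum, hf]
  have hfle : ∀ p : Fin n × Fin n, f p ≤ 1 := by
    intro p
    calc f p ≤ ‖(inner ℂ (T p.1 ξ) (T p.2 ξ) : ℂ)‖ := RCLike.re_le_norm _
      _ ≤ ‖T p.1 ξ‖ * ‖T p.2 ξ‖ := norm_inner_le_norm _ _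
      _ = 1 := by rw [hTξ, hTξ, mul_one]
  have htotal : (n : ℝ) ^ 2 - 2 * n * δ < ∑ p : Fin n × Fin n, f p := by
    rw [← h1]
    nlinarith [hSξ, norm_nonneg ((∑ i, T i) ξ)]
  have hre : ∀ i, 1 - 2 * n * δ ≤ RCLike.re (inner ℂ ξ (T i ξ) : ℂ) := by
    intro i
    have hmem : (i0, i) ∈ (Finset.univ : Finset (Fin n × Fin n)) := Finset.mem_univ _
    have hsplit := Finset.add_sum_erase _ f hmem
    have herase : ∑ p ∈ Finset.univ.erase (i0, i), f p ≤ ((n : ℝ) * n - 1) := by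
      have hcard : (Finset.univ.erase ((i0 : Fin n), i)).card = n * n - 1 := by
        rw [Finset.card_erase_of_mem hmem, Finset.card_univ, Fintype.card_prod, Fintype.card_fin]
      calc ∑ p ∈ Finset.univ.erase (i0, i), f p
          ≤ (Finset.univ.erase (i0, i)).card • (1:ℝ) :=
            Finset.sum_le_card_nsmul _ _ _ fun p _ => hfle p
        _ = ((n * n - 1 : ℕ) : ℝ) := by rw [hcard, nsmul_eq_mul, mul_one]
        _ ≤ (n : ℝ) * n - 1 := by
            have hn0 : n ≠ 0 := Nat.pos_iff_ne_zero.mp i0.pos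
            have h11 : (1:ℕ) ≤ n * n := Nat.one_le_iff_ne_zero.mpr (Nat.mul_ne_zero hn0 hn0)
            push_cast [Nat.cast_sub h11]
            ring_nf
            exact le_refl _
      
    have hfi : f (i0, i) = RCLike.re (inner ℂ ξ (T i ξ) : ℂ) := by rw [hf]; simp [hT0]
    nlinarith [hsplit, herase, htotal]
  refine ⟨ξ, hξ1, fun i => ?_⟩
  have hsq : ‖T i ξ - ξ‖ ^ 2 ≤ 4 * n * δ := by
    have hexp := @norm_sub_sq ℂ _ _ _ _ (T i ξ) ξ
    have hresymm : RCLike.re (inner ℂ (T i ξ) ξ : ℂ) = RCLike.re (inner ℂ ξ (T i ξ) : ℂ) :=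
      inner_re_symm _ _
    rw [hexp, hresymm, hTξ i, hξ1]
    have := hre i
    nlinarith
  have h4 : 4 * (n:ℝ) * δ = ε^2 / 2 := by
    rw [hδ]; field_simp; ring
  nlinarith [norm_nonneg (T i ξ - ξ), hsq]

end aux4
section aux5
variable {H : Type*} [NormedAddCommGroup H] [InnerProductSpace ℂ H] [CompleteSpace H]
  {Hτ : Type*} [NormedAddCommGroup Hτ] [InnerProductSpace ℂ Hτ]
  (tp : H → H → Hτ)
  (htp_inner : ∀ ξ ξ' η η' : H,
    (inner ℂ (tp ξ η) (tp ξ' η') : ℂ) = (inner ℂ ξ ξ' : ℂ) * (inner ℂ η' η : ℂ))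
  (htp_dense : Dense
    ((Submodule.span ℂ (Set.range fun v : H × H => tp v.1 v.2) : Submodule ℂ Hτ) : Set Hτ))

include htp_inner htp_dense

theorem exists_almost_inv_data (n : ℕ) (T : Fin n → (Hτ →L[ℂ] Hτ))
    (hiso : ∀ i ζ, ‖T i ζ‖ = ‖ζ‖) (i0 : Fin n) (hT0 : ∀ ζ, T i0 ζ = ζ)
    (hn : ‖∑ i, T i‖ = (n : ℝ)) (ε : ℝ) (hε : 0 < ε) (hε1 : ε ≤ 1) :
    ∃ d : TData H, ‖vecOf tp d‖ = 1 ∧ ∀ i, ‖T i (vecOf tp d) - vecOf tp d‖ ≤ ε := by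
  obtain ⟨ξ, hξ1, hξinv⟩ := almost_inv_abstract n T hiso i0 hT0 hn (ε/2)
    (by linarith) (by linarith)
  set s : Set Hτ :=
    ((Submodule.span ℂ (Set.range fun v : H × H => tp v.1 v.2) : Submodule ℂ Hτ) : Set Hτ)
  have hr : (0:ℝ) < min (ε/8) (1/2) := by
    apply lt_min <;> linarith
  have hξs : ξ ∈ closure s := by rw [htp_dense.closure_eq]; trivial
  obtain ⟨ζ, hζs, hζd⟩ := Metric.mem_closure_iff.mp hξs _ hr
  rw [dist_eq_norm] at hζd
  have hζξ : ‖ζ - ξ‖ < min (ε/8) (1/2) := by rw [← norm_neg]; simpa [neg_sub] using hζd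
  have hζξ8 : ‖ζ - ξ‖ ≤ ε/8 := le_of_lt (lt_of_lt_of_le hζξ (min_le_left _ _))
  have hζξ2 : ‖ζ - ξ‖ ≤ 1/2 := le_of_lt (lt_of_lt_of_le hζξ (min_le_right _ _))
  have hζlb : (1:ℝ)/2 ≤ ‖ζ‖ := by
    have := norm_sub_norm_le ξ ζ
    rw [← norm_neg (ξ - ζ), neg_sub] at this
    rw [hξ1] at this
    linarith
  have hζ0 : (0:ℝ) < ‖ζ‖ := by linarith
  set v : Hτ := ((‖ζ‖⁻¹ : ℝ) : ℂ) • ζ with hvdef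
  have hninv : ‖((‖ζ‖⁻¹ : ℝ) : ℂ)‖ = ‖ζ‖⁻¹ := by
    rw [Complex.norm_real, norm_inv, norm_norm]
  have hv1 : ‖v‖ = 1 := by
    rw [hvdef, norm_smul, hninv, inv_mul_cancel₀ (ne_of_gt hζ0)]
  have hvs : v ∈ s := Submodule.smul_mem _ _ hζs
  have hvζ : ‖v - ζ‖ ≤ ‖ζ - ξ‖ := by
    have h1 : v - ζ = ((((‖ζ‖⁻¹ : ℝ) : ℂ)) - 1) • ζ := by rw [hvdef, sub_smul, one_smul]
    rw [h1, norm_smul]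
    have h2 : ‖(((‖ζ‖⁻¹ : ℝ) : ℂ)) - 1‖ = |‖ζ‖⁻¹ - 1| := by
      rw [show (((‖ζ‖⁻¹ : ℝ) : ℂ)) - 1 = ((‖ζ‖⁻¹ - 1 : ℝ) : ℂ) by push_cast; ring,
        Complex.norm_real]
      rfl
    rw [h2]
    have h3 : |‖ζ‖⁻¹ - 1| * ‖ζ‖ = |1 - ‖ζ‖| := by
      rw [← abs_of_pos hζ0, ← abs_mul]
      congr 1
      field_simp
      rw [abs_of_pos hζ0]; ring
    rw [h3, show (1:ℝ) = ‖ξ‖ from hξ1.symm]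
    calc |‖ξ‖ - ‖ζ‖| ≤ ‖ξ - ζ‖ := abs_norm_sub_norm_le _ _
      _ = ‖ζ - ξ‖ := norm_sub_rev _ _
  have hvξ : ‖v - ξ‖ ≤ 2 * ‖ζ - ξ‖ := by
    calc ‖v - ξ‖ ≤ ‖v - ζ‖ + ‖ζ - ξ‖ := norm_sub_le_norm_sub_add_norm_sub v ζ ξ
      _ ≤ 2 * ‖ζ - ξ‖ := by linarith
  obtain ⟨d, hd⟩ := span_rep tp htp_inner hvs
  refine ⟨d, by rw [hd]; exact hv1, fun i => ?_⟩
  rw [hd]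
  have hsplit : T i v - v = T i (v - ξ) + ((T i ξ - ξ) + (ξ - v)) := by
    rw [map_sub]; abel
  calc ‖T i v - v‖ = ‖T i (v - ξ) + ((T i ξ - ξ) + (ξ - v))‖ := by rw [hsplit]
    _ ≤ ‖T i (v - ξ)‖ + (‖T i ξ - ξ‖ + ‖ξ - v‖) :=
        (norm_add_le _ _).trans (by gcongr; exact norm_add_le _ _)
    _ = ‖v - ξ‖ + (‖T i ξ - ξ‖ + ‖v - ξ‖) := by rw [hiso, norm_sub_rev ξ v]
    _ ≤ ε := by
        have := hξinv i
        linarith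

end aux5



/-- Let `B` be a finite factor with tracial state `τ`, acting standardly on
`L²(B)`, and let the unitary group `U(B)` (discrete) act on `A = B(L²(B))` by `Ad U`.
If for every finite family `U₁, …, U_n` of unitaries of `B` one has `‖Σᵢ Uᵢ ⊗ Ūᵢ‖ = n`,
then there exists a hypertrace for `B`: a state `ψ` on `B(L²(B))` with `ψ(U a U*) = ψ(a)`
for all `U ∈ U(B)` and all `a`.  The conjugate tensor product `L²(B) ⊗ conj(L²(B))` is
axiomatized by `tp`, and `W U = U ⊗ Ū`. -/
theorem exists_hypertrace_of_norm_sum_tensor_eq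
    {H : Type*} [NormedAddCommGroup H] [InnerProductSpace ℂ H] [CompleteSpace H]
    (B : VonNeumannAlgebra H)
    -- B is a factor
    (hfactor : ∀ x : H →L[ℂ] H, x ∈ B → x ∈ B.commutant → ∃ c : ℂ, x = c • (1 : H →L[ℂ] H))
    -- τ is a faithful tracial state on B (B is a finite factor)
    (τ : (H →L[ℂ] H) →ₗ[ℂ] ℂ)
    (hτ1 : τ 1 = 1)
    (hτtr : ∀ a ∈ B, ∀ b ∈ B, τ (a * b) = τ (b * a))
    (hτpos : ∀ a ∈ B, 0 ≤ τ (star a * a))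
    (hτfaith : ∀ a ∈ B, τ (star a * a) = 0 → a = 0)
    -- Hτ together with tp is L²(B) ⊗ conj(L²(B)); W U = U ⊗ Ū
    {Hτ : Type*} [NormedAddCommGroup Hτ] [InnerProductSpace ℂ Hτ] [CompleteSpace Hτ]
    (tp : H → H → Hτ)
    (htp_inner : ∀ ξ ξ' η η' : H,
      (inner ℂ (tp ξ η) (tp ξ' η') : ℂ) = (inner ℂ ξ ξ' : ℂ) * (inner ℂ η' η : ℂ))
    (htp_dense : Dense
      ((Submodule.span ℂ (Set.range fun v : H × H => tp v.1 v.2) : Submodule ℂ Hτ) : Set Hτ))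
    (W : (H →L[ℂ] H) → (Hτ →L[ℂ] Hτ))
    (hW : ∀ U : H →L[ℂ] H, U ∈ B → U ∈ unitary (H →L[ℂ] H) →
      ∀ ξ η : H, W U (tp ξ η) = tp (U ξ) (U η))
    -- hypothesis : ‖Σᵢ Uᵢ ⊗ Ūᵢ‖ = n for every finite family of unitaries of B
    (hnorm : ∀ (n : ℕ) (U : Fin n → (H →L[ℂ] H)),
      (∀ i, U i ∈ B) → (∀ i, U i ∈ unitary (H →L[ℂ] H)) →
      ‖∑ i, W (U i)‖ = (n : ℝ)) :
    -- conclusion : there exists a hypertrace for B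
    ∃ ψ : (H →L[ℂ] H) →ₗ[ℂ] ℂ, ψ 1 = 1 ∧
      (∀ a : H →L[ℂ] H, 0 ≤ ψ (star a * a)) ∧
      ∀ U : H →L[ℂ] H, U ∈ B → U ∈ unitary (H →L[ℂ] H) →
        ∀ a : H →L[ℂ] H, ψ (U * a * star U) = ψ a := by
  classical
  -- the subtype of unitaries of B
  set S := {U : H →L[ℂ] H // U ∈ B ∧ U ∈ unitary (H →L[ℂ] H)} with hS
  have h1B : (1 : H →L[ℂ] H) ∈ B := one_mem B
  have h1u : (1 : H →L[ℂ] H) ∈ unitary (H →L[ℂ] H) := one_mem _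
  have hone : (⟨1, h1B, h1u⟩ : S) = (⟨1, h1B, h1u⟩ : S) := rfl
  -- key: almost invariant vectors
  have hkey : ∀ (F : Finset S) (k : ℕ), ∃ d : TData H, ‖vecOf tp d‖ = 1 ∧
      ∀ u ∈ F, ‖W u.1 (vecOf tp d) - vecOf tp d‖ ≤ 1 / (k + 1) := by
    intro F k
    set F' : Finset S := insert ⟨1, h1B, h1u⟩ F with hF'
    set n := F'.card with hn
    set e := F'.equivFin with he
    set U : Fin n → (H →L[ℂ] H) := fun i => (e.symm i : S).1 with hU
    have hUB : ∀ i, U i ∈ B := fun i => (e.symm i : S).2.1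
    have hUu : ∀ i, U i ∈ unitary (H →L[ℂ] H) := fun i => (e.symm i : S).2.2
    set T : Fin n → (Hτ →L[ℂ] Hτ) := fun i => W (U i) with hT
    have hiso : ∀ i ζ, ‖T i ζ‖ = ‖ζ‖ := fun i ζ =>
      W_isometry tp htp_inner htp_dense W (hUu i) (hW (U i) (hUB i) (hUu i)) ζ
    set i0 : Fin n := e ⟨⟨1, h1B, h1u⟩, Finset.mem_insert_self _ _⟩ with hi0
    have hT0 : ∀ ζ, T i0 ζ = ζ := by
      intro ζ
      have hU0 : U i0 = 1 := by
        simp only [hU, hi0, Equiv.symm_apply_apply]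
      show W (U i0) ζ = ζ
      rw [hU0]
      exact W_one tp htp_inner htp_dense W (hW 1 h1B h1u) ζ
    have hnn : ‖∑ i, T i‖ = (n : ℝ) := hnorm n U hUB hUu
    have hεpos : (0:ℝ) < 1 / (k + 1) := by positivity
    have hε1 : (1:ℝ) / (k + 1) ≤ 1 := by
      rw [div_le_one (by positivity)]
      have : (0:ℝ) ≤ (k:ℝ) := Nat.cast_nonneg k
      linarith
    obtain ⟨d, hd1, hd2⟩ := exists_almost_inv_data tp htp_inner htp_dense n T hiso i0 hT0
      hnn (1 / (k + 1)) hεpos hε1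
    refine ⟨d, hd1, fun u hu => ?_⟩
    have hu' : u ∈ F' := Finset.mem_insert_of_mem hu
    have := hd2 (e ⟨u, hu'⟩)
    simp only [hT, hU, Equiv.symm_apply_apply] at this
    exact this
  choose dd hdd1 hdd2 using hkey
  -- the index type and ultrafilter
  set ι := Finset S × ℕ with hι
  haveI : Nonempty ι := ⟨(∅, 0)⟩
  set 𝒰 : Ultrafilter ι := Ultrafilter.of Filter.atTop with h𝒰
  have hult : (𝒰 : Filter ι) ≤ Filter.atTop := Ultrafilter.of_le _
  set p : ι → (H →L[ℂ] H) → ℂ := fun i a => psiOf tp (dd i.1 i.2) a with hp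
  have hbound : ∀ (a : H →L[ℂ] H) (i : ι), ‖p i a‖ ≤ ‖a‖ := by
    intro a i
    have := psiOf_norm_le tp htp_inner (dd i.1 i.2) a
    rwa [hdd1 i.1 i.2, one_pow, mul_one] at this
  -- limits exist
  have hconv : ∀ a : H →L[ℂ] H, ∃ z : ℂ, Filter.Tendsto (fun i => p i a) ↑𝒰 (𝓝 z) := by
    intro a
    have hc : IsCompact (Metric.closedBall (0:ℂ) ‖a‖) := isCompact_closedBall _ _
    have hle : ↑(𝒰.map (fun i => p i a)) ≤ Filter.principal (Metric.closedBall (0:ℂ) ‖a‖) := by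
      rw [Filter.le_principal_iff, Ultrafilter.coe_map, Filter.mem_map]
      refine Filter.univ_mem' fun i => ?_
      simp only [Set.mem_preimage, Metric.mem_closedBall, dist_zero_right]
      exact hbound a i
    obtain ⟨z, _, hz⟩ := hc.ultrafilter_le_nhds (𝒰.map (fun i => p i a)) hle
    exact ⟨z, by rwa [Ultrafilter.coe_map] at hz⟩
  choose ψf hψf using hconv
  -- linearity
  have hadd : ∀ a b, ψf (a + b) = ψf a + ψf b := by
    intro a b
    have h1 : Filter.Tendsto (fun i => p i a + p i b) ↑𝒰 (𝓝 (ψf a + ψf b)) :=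
      (hψf a).add (hψf b)
    have h2 : (fun i => p i (a + b)) = fun i => p i a + p i b := by
      funext i
      exact psiOf_add tp htp_inner (dd i.1 i.2) a b
    rw [← h2] at h1
    exact tendsto_nhds_unique (hψf (a + b)) h1
  have hsmul : ∀ (c : ℂ) a, ψf (c • a) = c * ψf a := by
    intro c a
    have h1 : Filter.Tendsto (fun i => c * p i a) ↑𝒰 (𝓝 (c * ψf a)) :=
      (hψf a).const_mul c
    have h2 : (fun i => p i (c • a)) = fun i => c * p i a := by
      funext i
      exact psiOf_smul tp htp_inner (dd i.1 i.2) c a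
    rw [← h2] at h1
    exact tendsto_nhds_unique (hψf (c • a)) h1
  refine ⟨{ toFun := ψf, map_add' := hadd,
            map_smul' := fun c a => by simpa using hsmul c a }, ?_, ?_, ?_⟩
  · -- ψ 1 = 1
    show ψf 1 = 1
    have h2 : (fun i : ι => p i 1) = fun _ => (1:ℂ) := by
      funext i
      simp only [hp]
      rw [psiOf_one tp htp_inner, hdd1 i.1 i.2, one_pow, Complex.ofReal_one]
    have h1 : Filter.Tendsto (fun i : ι => p i 1) ↑𝒰 (𝓝 1) := by
      rw [h2]; exact tendsto_const_nhds
    exact tendsto_nhds_unique (hψf 1) h1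
  · -- positivity
    intro a
    show (0:ℂ) ≤ ψf (star a * a)
    have hcl : IsClosed {z : ℂ | 0 ≤ z} := by
      have : {z : ℂ | 0 ≤ z}
          = Complex.re ⁻¹' Set.Ici 0 ∩ Complex.im ⁻¹' {0} := by
        ext z
        simp only [Set.mem_setOf_eq, Set.mem_inter_iff, Set.mem_preimage, Set.mem_Ici,
          Set.mem_singleton_iff, Complex.le_def, Complex.zero_re, Complex.zero_im]
        exact ⟨fun ⟨h1, h2⟩ => ⟨h1, h2.symm⟩, fun ⟨h1, h2⟩ => ⟨h1, h2.symm⟩⟩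
      rw [this]
      exact (isClosed_Ici.preimage Complex.continuous_re).inter
        (isClosed_singleton.preimage Complex.continuous_im)
    have hmem : ∀ i : ι, p i (star a * a) ∈ {z : ℂ | 0 ≤ z} := by
      intro i
      simp only [hp, Set.mem_setOf_eq]
      rw [psiOf_star_mul_self tp htp_inner]
      have : (0:ℝ) ≤ ‖tvecOf tp a (dd i.1 i.2)‖ ^ 2 := by positivity
      exact_mod_cast this
    exact hcl.mem_of_tendsto (hψf (star a * a)) (Filter.Eventually.of_forall hmem)
  · -- invariance
    intro U hUB hUu a
    show ψf (U * a * star U) = ψf a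
    set u' : S := ⟨star U, star_mem hUB, Unitary.star_mem hUu⟩ with hu'
    have hWstar := hW (star U) (star_mem hUB) (Unitary.star_mem hUu)
    -- eventual bound
    have hev : ∀ᶠ i : ι in ↑𝒰, ‖p i (U * a * star U) - p i a‖
        ≤ 2 * ‖a‖ * (1 / ((i.2 : ℝ) + 1)) := by
      refine hult (Filter.mem_of_superset (Filter.mem_atTop ((({u'} : Finset S), 0) : ι))
        fun i hi => ?_)
      have hu'mem : u' ∈ i.1 := by
        have h1 : ({u'} : Finset S) ⊆ i.1 := hi.1
        exact h1 (Finset.mem_singleton_self u')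
      show ‖p i (U * a * star U) - p i a‖ ≤ 2 * ‖a‖ * (1 / ((i.2 : ℝ) + 1))
      set d := dd i.1 i.2 with hd
      set e := conjData (star U) d with hecd
      have h1 : p i (U * a * star U) = psiOf tp e a := by
        simp only [hp]
        exact psiOf_conj tp htp_inner hUu d a
      have h2 : vecOf tp e = W (star U) (vecOf tp d) :=
        vecOf_conjData tp W hWstar d
      have h3 : ‖vecOf tp e‖ = 1 := by
        rw [hecd, norm_vec_conj tp htp_inner (Unitary.star_mem hUu) d, hdd1]
      have h4 : ‖vecOf tp e - vecOf tp d‖ ≤ 1 / ((i.2 : ℝ) + 1) := by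
        rw [h2]
        have := hdd2 i.1 i.2 u' hu'mem
        exact_mod_cast this
      have h5 := psiOf_diff_le tp htp_inner d e a
      rw [h1]
      calc ‖psiOf tp e a - p i a‖
          ≤ ‖a‖ * (‖vecOf tp e‖ + ‖vecOf tp d‖) * ‖vecOf tp e - vecOf tp d‖ := h5
        _ = 2 * ‖a‖ * ‖vecOf tp e - vecOf tp d‖ := by rw [h3, hdd1]; ring
        _ ≤ 2 * ‖a‖ * (1 / ((i.2 : ℝ) + 1)) := by
            have h2a : (0:ℝ) ≤ 2 * ‖a‖ := by positivity
            exact mul_le_mul_of_nonneg_left h4 h2a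
    have hg : Filter.Tendsto (fun i : ι => 2 * ‖a‖ * (1 / ((i.2 : ℝ) + 1))) ↑𝒰 (𝓝 0) := by
      have hnat : Filter.Tendsto (fun k : ℕ => 2 * ‖a‖ * (1 / ((k : ℝ) + 1)))
          Filter.atTop (𝓝 0) := by
        have h0 := tendsto_one_div_add_atTop_nhds_zero_nat (𝕜 := ℝ)
        have := h0.const_mul (2 * ‖a‖)
        simpa using this
      have hsnd : Filter.Tendsto (fun i : ι => i.2) Filter.atTop Filter.atTop := by
        rw [← Filter.prod_atTop_atTop_eq]
        exact Filter.tendsto_snd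
      exact (hnat.comp hsnd).mono_left hult
    have hdiff0 : Filter.Tendsto (fun i : ι => p i (U * a * star U) - p i a) ↑𝒰 (𝓝 0) :=
      squeeze_zero_norm' hev hg
    have h1 : Filter.Tendsto (fun i : ι => p i a + (p i (U * a * star U) - p i a))
        ↑𝒰 (𝓝 (ψf a + 0)) := (hψf a).add hdiff0
    have h2 : (fun i : ι => p i a + (p i (U * a * star U) - p i a))
        = fun i : ι => p i (U * a * star U) := by funext i; ring
    rw [h2, add_zero] at h1
    exact tendsto_nhds_unique (hψf (U * a * star U)) h1
end
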